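/- arXiv:2002.10387 — 3 statements merged into one kernel-verified Lean document; each statement's English description precedes it below -/
import Mathlib

section
/- Property P₂ of B-typical sets: for every ε > 0 there exists N such that for all n ≥ N, the probability that an i.i.d. sequence U⃗ ∼ ∏_{i=1}^n p(u_i) falls outside the B-typical set is at most ε, i.e. ∑_{u⃗ ∉ B^n_{V,ε}(U)} p(u⃗) ≤ ε. -/
open Real
open scoped BigOperators Classical

noncomputable section

/-- Probability of a length-`n` sequence under the i.i.d. product of the pmf `p`. -/
def seqProb {α : Type*} (p : α → ℝ) {n : ℕ} (u : Fin n → α) : ℝ :=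
  ∏ i, p (u i)

/-- Entropy in bits of a pmf on a finite alphabet. -/
def ent {α : Type*} [Fintype α] (p : α → ℝ) : ℝ :=
  -∑ a, p a * logb 2 (p a)

variable {U V : Type*} [Fintype U] [Fintype V]

/-- `U`-marginal of a joint pmf on `U × V`. -/
def margU (p : U × V → ℝ) : U → ℝ := fun u => ∑ v, p (u, v)

/-- `V`-marginal of a joint pmf on `U × V`. -/
def margV (p : U × V → ℝ) : V → ℝ := fun v => ∑ u, p (u, v)

/-- Conditional pmf of `V` given `U`. -/
def condVU (p : U × V → ℝ) (u : U) (v : V) : ℝ := p (u, v) / margU p u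

/-- The weakly typical set `A^n_ε(U)` with respect to a pmf `p`. -/
def typicalSet {α : Type*} [Fintype α] (p : α → ℝ) (n : ℕ) (ε : ℝ) :
    Set (Fin n → α) :=
  {u | 0 < seqProb p u ∧ |(-(1 / (n : ℝ)) * logb 2 (seqProb p u)) - ent p| ≤ ε}

/-- The jointly typical set `A^n_ε(UV)` with respect to a joint pmf `p`. -/
def jointTypicalSet (p : U × V → ℝ) (n : ℕ) (ε : ℝ) :
    Set ((Fin n → U) × (Fin n → V)) :=
  {uv | 0 < seqProb (margU p) uv.1 ∧ 0 < seqProb (margV p) uv.2 ∧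
    0 < seqProb p (fun i => (uv.1 i, uv.2 i)) ∧
    |(-(1 / (n : ℝ)) * logb 2 (seqProb (margU p) uv.1)) - ent (margU p)| ≤ ε ∧
    |(-(1 / (n : ℝ)) * logb 2 (seqProb (margV p) uv.2)) - ent (margV p)| ≤ ε ∧
    |(-(1 / (n : ℝ)) * logb 2 (seqProb p (fun i => (uv.1 i, uv.2 i)))) - ent p| ≤ ε}

/-- The B-typical set `B^n_{V,ε}(U)`. -/
def BtypicalSet (p : U × V → ℝ) (n : ℕ) (ε : ℝ) : Set (Fin n → U) :=
  {u | u ∈ typicalSet (margU p) n ε ∧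
    1 - ε ≤ ∑ v : Fin n → V,
      if (u, v) ∈ jointTypicalSet p n ε then ∏ i, condVU p (u i) (v i) else 0}

/-! ### Auxiliary lemmas -/

section AuxLemmas
variable {β : Type*} [Fintype β]

lemma sum_pi_prod (n : ℕ) (h : Fin n → β → ℝ) :
    ∑ x : Fin n → β, ∏ i, h i (x i) = ∏ i, ∑ a, h i a := by
  rw [Finset.prod_univ_sum]
  rw [Fintype.piFinset_univ]

lemma moment (w : β → ℝ) (hw1 : ∑ a, w a = 1) {n : ℕ} (s : Finset (Fin n)) (g : β → ℝ) :
    ∑ x : Fin n → β, (∏ i, w (x i)) * ∏ i ∈ s, g (x i)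
      = (∑ a, w a * g a) ^ s.card := by
  have h1 : ∀ x : Fin n → β, (∏ i, w (x i)) * ∏ i ∈ s, g (x i)
      = ∏ i, (w (x i) * if i ∈ s then g (x i) else 1) := by
    intro x
    rw [Finset.prod_mul_distrib]
    congr 1
    rw [Finset.prod_ite_mem, Finset.univ_inter]
  simp_rw [h1]
  rw [sum_pi_prod n (fun i a => w a * if i ∈ s then g a else 1)]
  have h2 : ∀ i : Fin n, (∑ a, w a * if i ∈ s then g a else 1)
      = if i ∈ s then ∑ a, w a * g a else 1 := by
    intro i; by_cases hi : i ∈ s <;> simp [hi, hw1]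
  simp_rw [h2]
  rw [Finset.prod_ite_mem, Finset.univ_inter, Finset.prod_const]

lemma sum_seqProb (w : β → ℝ) (hw1 : ∑ a, w a = 1) (n : ℕ) :
    ∑ x : Fin n → β, seqProb w x = 1 := by
  have := moment w hw1 (n := n) ∅ (fun _ => 1)
  simpa [seqProb] using this

lemma seqProb_factor_ne {w : β → ℝ} {m : ℕ} {x : Fin m → β}
    (h : 0 < seqProb w x) (i : Fin m) : w (x i) ≠ 0 := by
  intro h0
  have : seqProb w x = 0 := Finset.prod_eq_zero (Finset.mem_univ i) h0
  rw [this] at h; exact lt_irrefl 0 h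

lemma cheb_core (w : β → ℝ) (hw0 : ∀ a, 0 ≤ w a) (hw1 : ∑ a, w a = 1)
    (f : β → ℝ) {n : ℕ} (hn : 0 < n) {t : ℝ} (ht : 0 < t) :
    ∑ x : Fin n → β,
      (if t < |(1 / (n : ℝ)) * (∑ i, f (x i)) - ∑ a, w a * f a| then seqProb w x else 0)
      ≤ (∑ a, w a * (f a - ∑ b, w b * f b) ^ 2) / (n * t ^ 2) := by
  set μ := ∑ a, w a * f a with hμ
  set C := ∑ a, w a * (f a - μ) ^ 2 with hC
  have hsp : ∀ x : Fin n → β, 0 ≤ seqProb w x := fun x =>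
    Finset.prod_nonneg fun i _ => hw0 _
  have hnR : (0:ℝ) < n := by exact_mod_cast hn
  have inner_eq : ∀ i j : Fin n,
      (∑ x : Fin n → β, seqProb w x * ((f (x i) - μ) * (f (x j) - μ)))
        = if i = j then C else 0 := by
    intro i j
    have hsum0 : ∑ a, w a * (f a - μ) = 0 := by
      simp_rw [mul_sub, Finset.sum_sub_distrib, ← Finset.sum_mul, hw1]
      simp [hμ]
    by_cases hij : i = j
    · subst hij
      have h1 : ∀ x : Fin n → β, seqProb w x * ((f (x i) - μ) * (f (x i) - μ))
          = (∏ k, w (x k)) * ∏ k ∈ ({i} : Finset (Fin n)), (f (x k) - μ) ^ 2 := by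
        intro x; simp [seqProb, sq]
      simp_rw [h1]
      rw [moment w hw1 ({i} : Finset (Fin n)) (fun a => (f a - μ) ^ 2)]
      simp [hC]
    · simp only [if_neg hij]
      have h1 : ∀ x : Fin n → β, seqProb w x * ((f (x i) - μ) * (f (x j) - μ))
          = (∏ k, w (x k)) * ∏ k ∈ ({i, j} : Finset (Fin n)), (f (x k) - μ) := by
        intro x; rw [Finset.prod_pair hij]; simp [seqProb]
      simp_rw [h1]
      rw [moment w hw1 ({i, j} : Finset (Fin n)) (fun a => f a - μ), hsum0]
      simp [Finset.card_pair hij]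
  have key : ∑ x : Fin n → β, seqProb w x * (∑ i, (f (x i) - μ)) ^ 2 = n * C := by
    have expand : ∀ x : Fin n → β, seqProb w x * (∑ i, (f (x i) - μ)) ^ 2
        = ∑ i, ∑ j, seqProb w x * ((f (x i) - μ) * (f (x j) - μ)) := by
      intro x
      rw [sq, Finset.sum_mul_sum]
      rw [Finset.mul_sum]
      exact Finset.sum_congr rfl fun i _ => by rw [Finset.mul_sum]
    simp_rw [expand]
    rw [Finset.sum_comm]
    have : ∀ i : Fin n, (∑ x : Fin n → β, ∑ j, seqProb w x * ((f (x i) - μ) * (f (x j) - μ))) = C := by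
      intro i
      rw [Finset.sum_comm]
      have : ∀ j : Fin n, (∑ x : Fin n → β, seqProb w x * ((f (x i) - μ) * (f (x j) - μ)))
          = if j = i then C else 0 := by
        intro j
        rw [inner_eq i j]
        by_cases h : i = j <;> simp [h, eq_comm]
      simp_rw [this]
      simp
    simp_rw [this]
    simp [mul_comm]
  have pointwise : ∀ x : Fin n → β,
      (if t < |(1 / (n : ℝ)) * (∑ i, f (x i)) - μ| then seqProb w x else 0)
        ≤ seqProb w x * (∑ i, (f (x i) - μ)) ^ 2 / (n ^ 2 * t ^ 2) := by
    intro x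
    have hden : (0:ℝ) < n ^ 2 * t ^ 2 := by positivity
    by_cases hcond : t < |(1 / (n : ℝ)) * (∑ i, f (x i)) - μ|
    · simp only [if_pos hcond]
      have hS : (∑ i, (f (x i) - μ)) = (∑ i, f (x i)) - n * μ := by
        rw [Finset.sum_sub_distrib]
        simp [mul_comm]
      have habs : (n : ℝ) * t < |(∑ i, f (x i)) - n * μ| := by
        have : |(1 / (n : ℝ)) * (∑ i, f (x i)) - μ| = |(∑ i, f (x i)) - n * μ| / n := by
          have he : (1 / (n : ℝ)) * (∑ i, f (x i)) - μ = ((∑ i, f (x i)) - n * μ) / n := by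
            field_simp
          rw [he, abs_div, abs_of_pos hnR]
        rw [this] at hcond
        calc (n:ℝ) * t < n * (|(∑ i, f (x i)) - n * μ| / n) := by
              exact (mul_lt_mul_iff_right₀ hnR).mpr hcond
          _ = |(∑ i, f (x i)) - n * μ| := by field_simp
      have hsq : (n:ℝ) ^ 2 * t ^ 2 ≤ ((∑ i, f (x i)) - n * μ) ^ 2 := by
        have h1 : ((n:ℝ) * t) ^ 2 ≤ |(∑ i, f (x i)) - n * μ| ^ 2 := by
          apply pow_le_pow_left₀ (by positivity) habs.le
        calc (n:ℝ) ^ 2 * t ^ 2 = ((n:ℝ) * t) ^ 2 := by ring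
          _ ≤ |(∑ i, f (x i)) - n * μ| ^ 2 := h1
          _ = ((∑ i, f (x i)) - n * μ) ^ 2 := sq_abs _
      rw [hS]
      calc seqProb w x = seqProb w x * ((n ^ 2 * t ^ 2) / (n ^ 2 * t ^ 2)) := by
            rw [div_self hden.ne']; ring
        _ ≤ seqProb w x * (((∑ i, f (x i)) - n * μ) ^ 2 / (n ^ 2 * t ^ 2)) := by
            apply mul_le_mul_of_nonneg_left _ (hsp x)
            gcongr
        _ = seqProb w x * ((∑ i, f (x i)) - n * μ) ^ 2 / (n ^ 2 * t ^ 2) := by ring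
    · simp only [if_neg hcond]
      apply div_nonneg _ hden.le
      exact mul_nonneg (hsp x) (sq_nonneg _)
  calc ∑ x : Fin n → β,
      (if t < |(1 / (n : ℝ)) * (∑ i, f (x i)) - μ| then seqProb w x else 0)
      ≤ ∑ x : Fin n → β, seqProb w x * (∑ i, (f (x i) - μ)) ^ 2 / (n ^ 2 * t ^ 2) :=
        Finset.sum_le_sum fun x _ => pointwise x
    _ = (∑ x : Fin n → β, seqProb w x * (∑ i, (f (x i) - μ)) ^ 2) / (n ^ 2 * t ^ 2) := by
        rw [Finset.sum_div]
    _ = (n * C) / (n ^ 2 * t ^ 2) := by rw [key]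
    _ = C / (n * t ^ 2) := by
        field_simp

lemma cheb_exists (w : β → ℝ) (hw0 : ∀ a, 0 ≤ w a) (hw1 : ∑ a, w a = 1)
    (f : β → ℝ) (t δ : ℝ) (ht : 0 < t) (hδ : 0 < δ) :
    ∃ N : ℕ, 0 < N ∧ ∀ n : ℕ, N ≤ n →
      ∑ x : Fin n → β,
        (if t < |(1 / (n : ℝ)) * (∑ i, f (x i)) - ∑ a, w a * f a| then seqProb w x else 0)
        ≤ δ := by
  set C := ∑ a, w a * (f a - ∑ b, w b * f b) ^ 2 with hCdef
  have hC0 : 0 ≤ C := Finset.sum_nonneg fun a _ => mul_nonneg (hw0 a) (sq_nonneg _)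
  refine ⟨⌈C / (δ * t ^ 2)⌉₊ + 1, Nat.succ_pos _, fun n hn => ?_⟩
  have hn0 : 0 < n := lt_of_lt_of_le (Nat.succ_pos _) hn
  have hnR : (0:ℝ) < n := by exact_mod_cast hn0
  refine (cheb_core w hw0 hw1 f hn0 ht).trans ?_
  rw [div_le_iff₀ (by positivity)]
  have h1 : C / (δ * t ^ 2) ≤ (n : ℝ) := by
    refine (Nat.le_ceil _).trans ?_
    exact_mod_cast Nat.le_of_succ_le hn
  have h2 : C ≤ (δ * t ^ 2) * n := by
    rw [div_le_iff₀ (by positivity)] at h1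
    linarith
  calc C ≤ (δ * t ^ 2) * n := h2
    _ = δ * ((n : ℝ) * t ^ 2) := by ring

lemma bridge (w : β → ℝ) {m : ℕ} (x : Fin m → β) (hx : 0 < seqProb w x) :
    (-(1 / (m : ℝ)) * logb 2 (seqProb w x)) - ent w
      = (1 / (m : ℝ)) * (∑ i, -logb 2 (w (x i))) - ∑ a, w a * (-logb 2 (w a)) := by
  have hne : ∀ i : Fin m, w (x i) ≠ 0 := fun i => seqProb_factor_ne hx i
  have hlp : logb 2 (seqProb w x) = ∑ i, logb 2 (w (x i)) := by
    rw [seqProb]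
    exact Real.logb_prod _ _ fun i _ => hne i
  have h2 : (∑ i, -logb 2 (w (x i))) = -∑ i, logb 2 (w (x i)) :=
    Finset.sum_neg_distrib _
  have h3 : (∑ a, w a * (-logb 2 (w a))) = -∑ a, w a * logb 2 (w a) := by
    simp_rw [mul_neg]
    exact Finset.sum_neg_distrib _
  rw [hlp, h2, h3, ent]
  ring

end AuxLemmas

lemma pair_sum {n : ℕ} (F : (Fin n → U) → (Fin n → V) → ℝ) :
    ∑ u : Fin n → U, ∑ v : Fin n → V, F u v
      = ∑ x : Fin n → U × V, F (fun i => (x i).1) (fun i => (x i).2) := by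
  exact (Fintype.sum_prod_type (fun uv : (Fin n → U) × (Fin n → V) => F uv.1 uv.2)).symm.trans
    ((Equiv.sum_comp (Equiv.arrowProdEquivProdArrow (Fin n) (fun _ => U) (fun _ => V))
      (fun uv => F uv.1 uv.2)).symm)

/-- **Property P₂ of B-typical sets**: for every `ε > 0` there exists `N` such that
for all `n ≥ N`, the probability that an i.i.d. sequence falls outside the B-typical
set is at most `ε`. -/
theorem B_typical_high_probability
    (p : U × V → ℝ) (hp0 : ∀ x, 0 ≤ p x) (hp1 : ∑ x, p x = 1)
    (ε : ℝ) (hε : 0 < ε) :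
    ∃ N : ℕ, ∀ n : ℕ, N ≤ n →
      (∑ u : Fin n → U,
        if u ∉ BtypicalSet p n ε then seqProb (margU p) u else 0) ≤ ε := by
  classical
  have hq0 : ∀ u, 0 ≤ margU p u := fun u => Finset.sum_nonneg fun v _ => hp0 _
  have hq1 : ∑ u, margU p u = 1 := by
    simp only [margU]
    rw [← Fintype.sum_prod_type]
    exact hp1
  have hr0 : ∀ v, 0 ≤ margV p v := fun v => Finset.sum_nonneg fun u _ => hp0 _
  have hr1 : ∑ v, margV p v = 1 := by
    simp only [margV]
    rw [← Fintype.sum_prod_type_right]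
    exact hp1
  -- mean identities
  have hμ1 : (∑ z : U × V, p z * -logb 2 (margU p z.1))
      = ∑ a : U, margU p a * -logb 2 (margU p a) := by
    rw [Fintype.sum_prod_type]
    refine Finset.sum_congr rfl fun a _ => ?_
    show ∑ y : V, p (a, y) * -logb 2 (margU p a) = _
    rw [← Finset.sum_mul]
    rfl
  have hμ2 : (∑ z : U × V, p z * -logb 2 (margV p z.2))
      = ∑ b : V, margV p b * -logb 2 (margV p b) := by
    rw [Fintype.sum_prod_type_right]
    refine Finset.sum_congr rfl fun b _ => ?_
    show ∑ a : U, p (a, b) * -logb 2 (margV p b) = _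
    rw [← Finset.sum_mul]
    rfl
  -- Chebyshev instances
  obtain ⟨N1, hN1pos, hN1⟩ := cheb_exists (margU p) hq0 hq1
      (fun a => -logb 2 (margU p a)) ε (ε / 2) hε (by positivity)
  obtain ⟨N2, _, hN2⟩ := cheb_exists p hp0 hp1
      (fun z => -logb 2 (margU p z.1)) ε (ε * ε / 6) hε (by positivity)
  obtain ⟨N3, _, hN3⟩ := cheb_exists p hp0 hp1
      (fun z => -logb 2 (margV p z.2)) ε (ε * ε / 6) hε (by positivity)
  obtain ⟨N4, _, hN4⟩ := cheb_exists p hp0 hp1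
      (fun z => -logb 2 (p z)) ε (ε * ε / 6) hε (by positivity)
  refine ⟨max (max N1 N2) (max N3 N4), fun n hn => ?_⟩
  have hn1 : N1 ≤ n := le_trans (le_trans (le_max_left _ _) (le_max_left _ _)) hn
  have hn2 : N2 ≤ n := le_trans (le_trans (le_max_right _ _) (le_max_left _ _)) hn
  have hn3 : N3 ≤ n := le_trans (le_trans (le_max_left _ _) (le_max_right _ _)) hn
  have hn4 : N4 ≤ n := le_trans (le_trans (le_max_right _ _) (le_max_right _ _)) hn
  have hn0 : 0 < n := lt_of_lt_of_le hN1pos hn1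
  -- basic nonnegativity
  have hsqnn : ∀ u : Fin n → U, 0 ≤ seqProb (margU p) u := fun u =>
    Finset.prod_nonneg fun i _ => hq0 _
  have hspnn : ∀ x : Fin n → U × V, 0 ≤ seqProb p x := fun x =>
    Finset.prod_nonneg fun i _ => hp0 _
  have hcnn : ∀ a b, 0 ≤ condVU p a b := fun a b => div_nonneg (hp0 _) (hq0 a)
  set g : (Fin n → U) → ℝ := fun u => ∑ v : Fin n → V,
    if (u, v) ∈ jointTypicalSet p n ε then ∏ i, condVU p (u i) (v i) else 0 with hg
  have hg1 : ∀ u : Fin n → U, g u ≤ 1 := by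
    intro u
    have step1 : g u ≤ ∑ v : Fin n → V, ∏ i, condVU p (u i) (v i) := by
      rw [hg]
      refine Finset.sum_le_sum fun v _ => ?_
      by_cases h : (u, v) ∈ jointTypicalSet p n ε
      · rw [if_pos h]
      · rw [if_neg h]
        exact Finset.prod_nonneg fun i _ => hcnn _ _
    refine step1.trans ?_
    rw [sum_pi_prod n (fun i b => condVU p (u i) b)]
    refine Finset.prod_le_one (fun i _ => Finset.sum_nonneg fun b _ => hcnn _ _)
      fun i _ => ?_
    have hsum : (∑ b, condVU p (u i) b) = margU p (u i) / margU p (u i) := by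
      simp only [condVU]
      rw [← Finset.sum_div]
      rfl
    rw [hsum]
    rcases eq_or_ne (margU p (u i)) 0 with h0 | h0
    · simp [h0]
    · rw [div_self h0]
  -- the Markov identity
  have hmul : ∀ u : Fin n → U, seqProb (margU p) u * g u
      = ∑ v : Fin n → V, if (u, v) ∈ jointTypicalSet p n ε
          then seqProb p (fun i => (u i, v i)) else 0 := by
    intro u
    rw [hg, Finset.mul_sum]
    refine Finset.sum_congr rfl fun v _ => ?_
    by_cases h : (u, v) ∈ jointTypicalSet p n ε
    · rw [if_pos h, if_pos h]
      have hpos : 0 < seqProb (margU p) u := h.1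
      have hne : ∀ i, margU p (u i) ≠ 0 := fun i => seqProb_factor_ne hpos i
      simp only [seqProb]
      rw [← Finset.prod_mul_distrib]
      refine Finset.prod_congr rfl fun i _ => ?_
      simp only [condVU]
      rw [mul_comm, div_mul_cancel₀ _ (hne i)]
    · rw [if_neg h, if_neg h, mul_zero]
  have htotU : ∑ u : Fin n → U, seqProb (margU p) u = 1 := sum_seqProb _ hq1 n
  have htotJ : ∑ u : Fin n → U, ∑ v : Fin n → V,
      seqProb p (fun i => (u i, v i)) = 1 := by
    rw [pair_sum (fun u v => seqProb p (fun i => (u i, v i)))]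
    exact sum_seqProb p hp1 n
  have hQsplit : ∑ u : Fin n → U, seqProb (margU p) u * (1 - g u)
      = ∑ u : Fin n → U, ∑ v : Fin n → V,
          if (u, v) ∉ jointTypicalSet p n ε
            then seqProb p (fun i => (u i, v i)) else 0 := by
    have e1 : ∀ u : Fin n → U, seqProb (margU p) u * (1 - g u)
        = seqProb (margU p) u - seqProb (margU p) u * g u := fun u => by ring
    simp_rw [e1, hmul]
    rw [Finset.sum_sub_distrib, htotU, ← htotJ, ← Finset.sum_sub_distrib]
    refine Finset.sum_congr rfl fun u _ => ?_
    rw [← Finset.sum_sub_distrib]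
    refine Finset.sum_congr rfl fun v _ => ?_
    by_cases h : (u, v) ∈ jointTypicalSet p n ε <;> simp [h]
  -- bound on the joint atypicality probability
  have hQbound : (∑ u : Fin n → U, ∑ v : Fin n → V,
      if (u, v) ∉ jointTypicalSet p n ε
        then seqProb p (fun i => (u i, v i)) else 0) ≤ ε * ε / 2 := by
    rw [pair_sum (fun u v => if (u, v) ∉ jointTypicalSet p n ε
        then seqProb p (fun i => (u i, v i)) else 0)]
    have pt : ∀ x : Fin n → U × V,
        (if ((fun i => (x i).1), (fun i => (x i).2)) ∉ jointTypicalSet p n ε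
            then seqProb p (fun i => ((x i).1, (x i).2)) else 0)
        ≤ (if ε < |(1 / (n : ℝ)) * (∑ i, -logb 2 (margU p ((x i).1)))
              - ∑ a : U × V, p a * -logb 2 (margU p a.1)| then seqProb p x else 0)
          + (if ε < |(1 / (n : ℝ)) * (∑ i, -logb 2 (margV p ((x i).2)))
              - ∑ a : U × V, p a * -logb 2 (margV p a.2)| then seqProb p x else 0)
          + (if ε < |(1 / (n : ℝ)) * (∑ i, -logb 2 (p (x i)))
              - ∑ a : U × V, p a * -logb 2 (p a)| then seqProb p x else 0) := by
      intro x
      have hx0 := hspnn x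
      by_cases hmem : ((fun i => (x i).1), (fun i => (x i).2)) ∈ jointTypicalSet p n ε
      · rw [if_neg (not_not_intro hmem)]
        split_ifs <;> linarith
      · rw [if_pos hmem]
        rcases le_or_gt (seqProb p x) 0 with hle | hpos
        · have h0 : seqProb p (fun i => ((x i).1, (x i).2)) = 0 :=
            le_antisymm hle (hspnn x)
          rw [h0]
          split_ifs <;> linarith
        · have hfac : ∀ i, 0 < p (x i) := fun i =>
            lt_of_le_of_ne (hp0 _) (Ne.symm (seqProb_factor_ne hpos i))
          have hposU : 0 < seqProb (margU p) (fun i => (x i).1) := by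
            refine Finset.prod_pos fun i _ => lt_of_lt_of_le (hfac i) ?_
            exact Finset.single_le_sum (f := fun b => p ((x i).1, b))
              (fun b _ => hp0 _) (Finset.mem_univ (x i).2)
          have hposV : 0 < seqProb (margV p) (fun i => (x i).2) := by
            refine Finset.prod_pos fun i _ => lt_of_lt_of_le (hfac i) ?_
            exact Finset.single_le_sum (f := fun a => p (a, (x i).2))
              (fun a _ => hp0 _) (Finset.mem_univ (x i).1)
          have hposJ : 0 < seqProb p
              (fun i => ((fun i => (x i).1) i, (fun i => (x i).2) i)) := hpos
          have h6 : ¬(|(-(1 / (n : ℝ)) * logb 2 (seqProb (margU p) (fun i => (x i).1)))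
                - ent (margU p)| ≤ ε ∧
              |(-(1 / (n : ℝ)) * logb 2 (seqProb (margV p) (fun i => (x i).2)))
                - ent (margV p)| ≤ ε ∧
              |(-(1 / (n : ℝ)) * logb 2 (seqProb p
                  (fun i => ((fun i => (x i).1) i, (fun i => (x i).2) i)))) - ent p| ≤ ε) :=
            fun hc => hmem ⟨hposU, hposV, hposJ, hc.1, hc.2.1, hc.2.2⟩
          have hb1 := bridge (margU p) (fun i => (x i).1) hposU
          have hb2 := bridge (margV p) (fun i => (x i).2) hposV
          have hb3 := bridge p x hpos
          have hnn1 : (0:ℝ) ≤ (if ε < |(1 / (n : ℝ)) * (∑ i, -logb 2 (margU p ((x i).1)))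
              - ∑ a : U × V, p a * -logb 2 (margU p a.1)| then seqProb p x else 0) := by
            split_ifs <;> linarith
          have hnn2 : (0:ℝ) ≤ (if ε < |(1 / (n : ℝ)) * (∑ i, -logb 2 (margV p ((x i).2)))
              - ∑ a : U × V, p a * -logb 2 (margV p a.2)| then seqProb p x else 0) := by
            split_ifs <;> linarith
          have hnn3 : (0:ℝ) ≤ (if ε < |(1 / (n : ℝ)) * (∑ i, -logb 2 (p (x i)))
              - ∑ a : U × V, p a * -logb 2 (p a)| then seqProb p x else 0) := by
            split_ifs <;> linarith
          rcases not_and_or.mp h6 with h1 | h23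
          · have hE : ε < |(1 / (n : ℝ)) * (∑ i, -logb 2 (margU p ((x i).1)))
                - ∑ a : U × V, p a * -logb 2 (margU p a.1)| := by
              rw [hμ1, ← hb1]
              exact not_le.mp h1
            rw [if_pos hE]
            linarith
          rcases not_and_or.mp h23 with h2 | h3
          · have hE : ε < |(1 / (n : ℝ)) * (∑ i, -logb 2 (margV p ((x i).2)))
                - ∑ a : U × V, p a * -logb 2 (margV p a.2)| := by
              rw [hμ2, ← hb2]
              exact not_le.mp h2
            rw [if_pos hE]
            linarith
          · have hE : ε < |(1 / (n : ℝ)) * (∑ i, -logb 2 (p (x i)))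
                - ∑ a : U × V, p a * -logb 2 (p a)| := by
              rw [← hb3]
              exact not_le.mp h3
            rw [if_pos hE]
            linarith
    calc (∑ x : Fin n → U × V,
        if ((fun i => (x i).1), (fun i => (x i).2)) ∉ jointTypicalSet p n ε
          then seqProb p (fun i => ((x i).1, (x i).2)) else 0)
        ≤ ∑ x : Fin n → U × V,
          ((if ε < |(1 / (n : ℝ)) * (∑ i, -logb 2 (margU p ((x i).1)))
              - ∑ a : U × V, p a * -logb 2 (margU p a.1)| then seqProb p x else 0)
          + (if ε < |(1 / (n : ℝ)) * (∑ i, -logb 2 (margV p ((x i).2)))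
              - ∑ a : U × V, p a * -logb 2 (margV p a.2)| then seqProb p x else 0)
          + (if ε < |(1 / (n : ℝ)) * (∑ i, -logb 2 (p (x i)))
              - ∑ a : U × V, p a * -logb 2 (p a)| then seqProb p x else 0)) :=
          Finset.sum_le_sum fun x _ => pt x
      _ ≤ ε * ε / 6 + ε * ε / 6 + ε * ε / 6 := by
          rw [Finset.sum_add_distrib, Finset.sum_add_distrib]
          exact add_le_add (add_le_add (hN2 n hn2) (hN3 n hn3)) (hN4 n hn4)
      _ = ε * ε / 2 := by ring
  -- bound on the marginal atypicality probability
  have hT1 : (∑ u : Fin n → U,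
      if u ∉ typicalSet (margU p) n ε then seqProb (margU p) u else 0) ≤ ε / 2 := by
    refine le_trans (Finset.sum_le_sum fun u _ => ?_) (hN1 n hn1)
    by_cases hA : u ∈ typicalSet (margU p) n ε
    · rw [if_neg (not_not_intro hA)]
      split_ifs <;> first | exact hsqnn u | exact le_refl _
    · rw [if_pos hA]
      rcases le_or_gt (seqProb (margU p) u) 0 with hle | hpos
      · have h0 : seqProb (margU p) u = 0 := le_antisymm hle (hsqnn u)
        rw [h0]
        split_ifs <;> simp
      · have hdev : ε < |(-(1 / (n : ℝ)) * logb 2 (seqProb (margU p) u))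
            - ent (margU p)| := by
          by_contra hcon
          push_neg at hcon
          exact hA ⟨hpos, hcon⟩
        rw [bridge (margU p) u hpos] at hdev
        rw [if_pos hdev]
  -- decomposition of the complement of the B-typical set
  have hsplit : ∀ u : Fin n → U,
      (if u ∉ BtypicalSet p n ε then seqProb (margU p) u else 0)
        ≤ (if u ∉ typicalSet (margU p) n ε then seqProb (margU p) u else 0)
          + (if g u < 1 - ε then seqProb (margU p) u else 0) := by
    intro u
    have hnnA : (0:ℝ) ≤ (if u ∉ typicalSet (margU p) n ε
        then seqProb (margU p) u else 0) := by
      split_ifs <;> first | exact hsqnn u | exact le_refl _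
    have hnnM : (0:ℝ) ≤ (if g u < 1 - ε then seqProb (margU p) u else 0) := by
      split_ifs <;> first | exact hsqnn u | exact le_refl _
    by_cases hB : u ∉ BtypicalSet p n ε
    · rw [if_pos hB]
      by_cases hA : u ∈ typicalSet (margU p) n ε
      · have hglt : g u < 1 - ε := by
          by_contra hcon
          push_neg at hcon
          exact hB ⟨hA, hcon⟩
        rw [if_neg (not_not_intro hA), if_pos hglt, zero_add]
      · rw [if_pos hA]
        linarith
    · rw [if_neg hB]
      linarith
  -- pointwise Markov bound
  have hmark : ∀ u : Fin n → U,
      (if g u < 1 - ε then seqProb (margU p) u else 0)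
        ≤ seqProb (margU p) u * (1 - g u) / ε := by
    intro u
    by_cases h : g u < 1 - ε
    · rw [if_pos h]
      have h1 : 1 ≤ (1 - g u) / ε := (one_le_div hε).mpr (by linarith)
      calc seqProb (margU p) u = seqProb (margU p) u * 1 := (mul_one _).symm
        _ ≤ seqProb (margU p) u * ((1 - g u) / ε) :=
            mul_le_mul_of_nonneg_left h1 (hsqnn u)
        _ = seqProb (margU p) u * (1 - g u) / ε := by ring
    · rw [if_neg h]
      have h1 := hg1 u
      have h2 := hsqnn u
      apply div_nonneg _ hε.le
      apply mul_nonneg h2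
      linarith
  have hT2 : (∑ u : Fin n → U,
      if g u < 1 - ε then seqProb (margU p) u else 0) ≤ ε / 2 := by
    calc (∑ u : Fin n → U, if g u < 1 - ε then seqProb (margU p) u else 0)
        ≤ ∑ u : Fin n → U, seqProb (margU p) u * (1 - g u) / ε :=
          Finset.sum_le_sum fun u _ => hmark u
      _ = (∑ u : Fin n → U, seqProb (margU p) u * (1 - g u)) / ε :=
          (Finset.sum_div _ _ _).symm
      _ ≤ (ε * ε / 2) / ε := by
          rw [hQsplit]
          gcongr
      _ = ε / 2 := by
          have hne : ε ≠ 0 := hε.ne'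
          field_simp
  calc (∑ u : Fin n → U,
      if u ∉ BtypicalSet p n ε then seqProb (margU p) u else 0)
      ≤ ∑ u : Fin n → U,
        ((if u ∉ typicalSet (margU p) n ε then seqProb (margU p) u else 0)
          + (if g u < 1 - ε then seqProb (margU p) u else 0)) :=
        Finset.sum_le_sum fun u _ => hsplit u
    _ = (∑ u : Fin n → U, if u ∉ typicalSet (margU p) n ε
          then seqProb (margU p) u else 0)
        + ∑ u : Fin n → U, if g u < 1 - ε then seqProb (margU p) u else 0 :=
        Finset.sum_add_distrib
    _ ≤ ε / 2 + ε / 2 := add_le_add hT1 hT2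
    _ = ε := by ring
end
end

section
/- Property P₃ of B-typical sets, lower bound: for every ε > 0 there exists N such that for all n ≥ N, the cardinality of the B-typical set satisfies |B^n_{V,ε}(U)| ≥ (1−ε)·2^{n(H(U)−ε)}. -/
open Real
open scoped BigOperators Classical

noncomputable section

variable {U V : Type*} [Fintype U] [Fintype V]

lemma sum_pi_prod_s3 {α : Type*} [Fintype α] {n : ℕ} (h : Fin n → α → ℝ) :
    ∑ w : Fin n → α, ∏ k, h k (w k) = ∏ k, ∑ a, h k a :=
  (Fintype.prod_sum h).symm

lemma second_moment {α : Type*} [Fintype α] {n : ℕ} (q g : α → ℝ)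
    (hq1 : ∑ a, q a = 1) (hg : ∑ a, q a * g a = 0) :
    ∑ w : Fin n → α, (∏ k, q (w k)) * (∑ i, g (w i))^2 = n * ∑ a, q a * g a ^ 2 := by
  have hterm : ∀ (i j : Fin n) (w : Fin n → α),
      (∏ k, q (w k)) * (g (w i) * g (w j))
        = ∏ k, (q (w k) * (if k = i then g (w k) else 1) * (if k = j then g (w k) else 1)) := by
    intro i j w
    rw [Finset.prod_mul_distrib, Finset.prod_mul_distrib,
      Finset.prod_ite_eq' Finset.univ i (fun k => g (w k)),
      Finset.prod_ite_eq' Finset.univ j (fun k => g (w k))]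
    simp [mul_assoc]
  have key : ∀ i j : Fin n,
      (∑ w : Fin n → α, ∏ k,
        (q (w k) * (if k = i then g (w k) else 1) * (if k = j then g (w k) else 1)))
        = if i = j then ∑ a, q a * g a ^ 2 else 0 := by
    intro i j
    rw [sum_pi_prod_s3 (fun k a => q a * (if k = i then g a else 1) * (if k = j then g a else 1))]
    by_cases hij : i = j
    · subst hij
      simp only [if_pos rfl]
      have h1 : ∀ k : Fin n, (∑ a, q a * (if k = i then g a else 1) * (if k = i then g a else 1))
          = if k = i then ∑ a, q a * g a ^ 2 else 1 := by
        intro k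
        by_cases hk : k = i
        · rw [if_pos hk]
          apply Finset.sum_congr rfl; intro a _
          rw [if_pos hk]; ring
        · simp [hk, hq1]
      rw [Finset.prod_congr rfl (fun k _ => h1 k), Finset.prod_ite_eq' Finset.univ i
        (fun _ => ∑ a, q a * g a ^ 2)]
      simp
    · rw [if_neg hij]
      apply Finset.prod_eq_zero (Finset.mem_univ i)
      simp [hij, hg]
  calc ∑ w : Fin n → α, (∏ k, q (w k)) * (∑ i, g (w i))^2
      = ∑ w : Fin n → α, ∑ i, ∑ j, (∏ k, q (w k)) * (g (w i) * g (w j)) := by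
        apply Finset.sum_congr rfl; intro w _
        rw [sq, Finset.sum_mul_sum, Finset.mul_sum]
        apply Finset.sum_congr rfl; intro i _
        rw [Finset.mul_sum]
    _ = ∑ i, ∑ j, ∑ w : Fin n → α, (∏ k, q (w k)) * (g (w i) * g (w j)) := by
        rw [Finset.sum_comm]
        apply Finset.sum_congr rfl; intro i _
        rw [Finset.sum_comm]
    _ = ∑ i : Fin n, ∑ j : Fin n, (if i = j then ∑ a, q a * g a ^ 2 else 0) := by
        apply Finset.sum_congr rfl; intro i _
        apply Finset.sum_congr rfl; intro j _
        rw [Finset.sum_congr rfl (fun w _ => hterm i j w), key i j]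
    _ = ∑ i : Fin n, ∑ a, q a * g a ^ 2 := by
        apply Finset.sum_congr rfl; intro i _
        simp
    _ = n * ∑ a, q a * g a ^ 2 := by
        simp [Finset.sum_const, Finset.card_univ, nsmul_eq_mul]

lemma cheb {α : Type*} [Fintype α] {n : ℕ} (hn : 0 < n) (q g : α → ℝ)
    (hq0 : ∀ a, 0 ≤ q a) (hq1 : ∑ a, q a = 1) (hg : ∑ a, q a * g a = 0)
    {ε : ℝ} (hε : 0 < ε) (E : (Fin n → α) → Prop)
    (hE : ∀ w, E w → ((n:ℝ)*ε)^2 ≤ (∑ i, g (w i))^2) :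
    ∑ w : Fin n → α, (if E w then ∏ i, q (w i) else 0)
      ≤ (∑ a, q a * g a ^ 2) / ((n:ℝ) * ε^2) := by
  have hn' : (0:ℝ) < n := by exact_mod_cast hn
  have hnε : (0:ℝ) < ((n:ℝ)*ε)^2 := by positivity
  have key := second_moment (n := n) q g hq1 hg
  have step : ∑ w : Fin n → α, (if E w then ∏ i, q (w i) else 0)
      ≤ ∑ w : Fin n → α, (∏ i, q (w i)) * (∑ i, g (w i))^2 / ((n:ℝ)*ε)^2 := by
    apply Finset.sum_le_sum; intro w _
    have hq : 0 ≤ ∏ i, q (w i) := Finset.prod_nonneg (fun i _ => hq0 _)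
    by_cases h : E w
    · rw [if_pos h, le_div_iff₀ hnε]
      exact mul_le_mul_of_nonneg_left (hE w h) hq
    · rw [if_neg h]; positivity
  refine step.trans ?_
  rw [← Finset.sum_div, key]
  have hV : 0 ≤ ∑ a, q a * g a ^ 2 :=
    Finset.sum_nonneg fun a _ => mul_nonneg (hq0 a) (sq_nonneg _)
  rw [div_le_div_iff₀ (by positivity) (by positivity)]
  apply le_of_eq; ring

lemma cheb_log {α : Type*} [Fintype α] {n : ℕ} (hn : 0 < n)
    (p q' : α → ℝ) (hp0 : ∀ a, 0 ≤ p a) (hp1 : ∑ a, p a = 1)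
    (hq' : ∀ a, 0 < p a → 0 < q' a) (m : ℝ)
    (hm : ∑ a, p a * (-(logb 2 (q' a)) - m) = 0)
    {ε : ℝ} (hε : 0 < ε) :
    ∑ w : Fin n → α,
        (if (0 < ∏ i, p (w i) ∧ ε < |(-(1/(n:ℝ))) * logb 2 (∏ i, q' (w i)) - m|)
          then ∏ i, p (w i) else 0)
      ≤ (∑ a, p a * (-(logb 2 (q' a)) - m)^2) / ((n:ℝ) * ε^2) := by
  have hE : ∀ w : Fin n → α,
      (0 < ∏ i, p (w i) ∧ ε < |(-(1/(n:ℝ))) * logb 2 (∏ i, q' (w i)) - m|) →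
        ((n:ℝ)*ε)^2 ≤ (∑ i, (-(logb 2 (q' (w i))) - m))^2 := by
    intro w hw
    obtain ⟨hpos, habs⟩ := hw
    have hn' : (0:ℝ) < n := by exact_mod_cast hn
    have hpos' : ∀ i, 0 < p (w i) := by
      intro i
      rcases (hp0 (w i)).lt_or_eq with h | h
      · exact h
      · exact absurd (Finset.prod_eq_zero (Finset.mem_univ i) h.symm) hpos.ne'
    have hqpos : ∀ i, 0 < q' (w i) := fun i => hq' _ (hpos' i)
    have hlog : logb 2 (∏ i, q' (w i)) = ∑ i, logb 2 (q' (w i)) :=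
      Real.logb_prod _ _ (fun i _ => (hqpos i).ne')
    have hSval : (∑ i, (-(logb 2 (q' (w i))) - m))
        = -(∑ i, logb 2 (q' (w i))) - (n:ℝ) * m := by
      rw [Finset.sum_sub_distrib]
      simp [Finset.card_univ, mul_comm]
    have hexpr : (-(1/(n:ℝ))) * logb 2 (∏ i, q' (w i)) - m
        = (∑ i, (-(logb 2 (q' (w i))) - m)) / n := by
      rw [hlog, hSval]; field_simp
    rw [hexpr, abs_div, abs_of_pos hn', lt_div_iff₀ hn'] at habs
    calc ((n:ℝ)*ε)^2 ≤ |∑ i, (-(logb 2 (q' (w i))) - m)|^2 := by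
          apply pow_le_pow_left₀ (by positivity)
          nlinarith
      _ = (∑ i, (-(logb 2 (q' (w i))) - m))^2 := sq_abs _
  have main := cheb hn p (fun a => -(logb 2 (q' a)) - m) hp0 hp1 hm hε _ hE
  convert main using 2 with w
  split_ifs <;> rfl

/-- **Property P₃ of B-typical sets, lower bound**: for every `ε > 0` there exists `N`
such that for all `n ≥ N`, `|B^n_{V,ε}(U)| ≥ (1-ε)·2^{n(H(U)-ε)}`. -/
theorem B_typical_card_lower
    (p : U × V → ℝ) (hp0 : ∀ x, 0 ≤ p x) (hp1 : ∑ x, p x = 1)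
    (ε : ℝ) (hε : 0 < ε) :
    ∃ N : ℕ, ∀ n : ℕ, N ≤ n →
      (1 - ε) * (2 : ℝ) ^ ((n : ℝ) * (ent (margU p) - ε)) ≤
        ((BtypicalSet p n ε).ncard : ℝ) := by
  rcases le_or_gt 1 ε with hε1 | hε1
  · refine ⟨0, fun n _ => ?_⟩
    have h2 : (0:ℝ) < (2:ℝ) ^ ((n:ℝ) * (ent (margU p) - ε)) :=
      Real.rpow_pos_of_pos two_pos _
    have h3 : (0:ℝ) ≤ ((BtypicalSet p n ε).ncard : ℝ) := Nat.cast_nonneg _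
    nlinarith
  -- Main case : ε < 1
  have hmU0 : ∀ a, 0 ≤ margU p a := fun a => Finset.sum_nonneg fun b _ => hp0 _
  have hmUpos : ∀ x : U × V, 0 < p x → 0 < margU p x.1 := by
    intro x hx
    have : p (x.1, x.2) ≤ margU p x.1 :=
      Finset.single_le_sum (fun b _ => hp0 (x.1, b)) (Finset.mem_univ x.2)
    simpa using lt_of_lt_of_le hx (by simpa using this)
  have hmVpos : ∀ x : U × V, 0 < p x → 0 < margV p x.2 := by
    intro x hx
    have : p (x.1, x.2) ≤ margV p x.2 :=
      Finset.single_le_sum (fun a _ => hp0 (a, x.2)) (Finset.mem_univ x.1)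
    simpa using lt_of_lt_of_le hx (by simpa using this)
  -- the three means
  have e1 : ∑ x : U × V, p x * (-(logb 2 (margU p x.1))) = ent (margU p) := by
    calc ∑ x : U × V, p x * (-(logb 2 (margU p x.1)))
        = ∑ a, ∑ b, p (a, b) * (-(logb 2 (margU p a))) := by rw [Fintype.sum_prod_type]
      _ = ∑ a, (∑ b, p (a, b)) * (-(logb 2 (margU p a))) := by
          apply Finset.sum_congr rfl; intro a _; rw [Finset.sum_mul]
      _ = -∑ a, margU p a * logb 2 (margU p a) := by
          rw [← Finset.sum_neg_distrib]
          apply Finset.sum_congr rfl; intro a _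
          rw [margU]; ring
      _ = ent (margU p) := rfl
  have e2 : ∑ x : U × V, p x * (-(logb 2 (margV p x.2))) = ent (margV p) := by
    calc ∑ x : U × V, p x * (-(logb 2 (margV p x.2)))
        = ∑ b, ∑ a, p (a, b) * (-(logb 2 (margV p b))) := by rw [Fintype.sum_prod_type_right]
      _ = ∑ b, (∑ a, p (a, b)) * (-(logb 2 (margV p b))) := by
          apply Finset.sum_congr rfl; intro b _; rw [Finset.sum_mul]
      _ = -∑ b, margV p b * logb 2 (margV p b) := by
          rw [← Finset.sum_neg_distrib]
          apply Finset.sum_congr rfl; intro b _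
          rw [margV]; ring
      _ = ent (margV p) := rfl
  have e3 : ∑ x : U × V, p x * (-(logb 2 (p x))) = ent p := by
    rw [ent, ← Finset.sum_neg_distrib]
    apply Finset.sum_congr rfl; intro x _; ring
  have center : ∀ (f : U × V → ℝ) (m : ℝ), (∑ x, p x * f x = m) →
      ∑ x, p x * (f x - m) = 0 := by
    intro f m hm
    simp only [mul_sub]
    rw [Finset.sum_sub_distrib, hm, ← Finset.sum_mul, hp1, one_mul, sub_self]
  have hm1 : ∑ x : U × V, p x * (-(logb 2 (margU p x.1)) - ent (margU p)) = 0 :=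
    center _ _ e1
  have hm2 : ∑ x : U × V, p x * (-(logb 2 (margV p x.2)) - ent (margV p)) = 0 :=
    center _ _ e2
  have hm3 : ∑ x : U × V, p x * (-(logb 2 (p x)) - ent p) = 0 :=
    center _ _ e3
  -- variances
  set W1 := ∑ x : U × V, p x * (-(logb 2 (margU p x.1)) - ent (margU p))^2 with hW1
  set W2 := ∑ x : U × V, p x * (-(logb 2 (margV p x.2)) - ent (margV p))^2 with hW2
  set W3 := ∑ x : U × V, p x * (-(logb 2 (p x)) - ent p)^2 with hW3
  have hWnn : 0 ≤ W1 + W2 + W3 := by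
    have h1 : 0 ≤ W1 := Finset.sum_nonneg fun x _ => mul_nonneg (hp0 x) (sq_nonneg _)
    have h2 : 0 ≤ W2 := Finset.sum_nonneg fun x _ => mul_nonneg (hp0 x) (sq_nonneg _)
    have h3 : 0 ≤ W3 := Finset.sum_nonneg fun x _ => mul_nonneg (hp0 x) (sq_nonneg _)
    linarith
  obtain ⟨M, hM⟩ := exists_nat_ge ((W1 + W2 + W3) / ε^4)
  refine ⟨M + 1, fun n hn => ?_⟩
  have hn0 : 0 < n := lt_of_lt_of_le (Nat.succ_pos M) hn
  have hn' : (0:ℝ) < n := by exact_mod_cast hn0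
  have hnM : (M:ℝ) ≤ n := by exact_mod_cast le_trans (Nat.le_succ M) hn
  -- Chebyshev bounds
  have hD1 := cheb_log (n := n) hn0 p (fun x => margU p x.1) hp0 hp1
    (fun a ha => hmUpos a ha) (ent (margU p)) hm1 hε
  have hD2 := cheb_log (n := n) hn0 p (fun x => margV p x.2) hp0 hp1
    (fun a ha => hmVpos a ha) (ent (margV p)) hm2 hε
  have hD3 := cheb_log (n := n) hn0 p p hp0 hp1 (fun a ha => ha) (ent p) hm3 hε
  -- total probability
  have hPsum : ∑ w : Fin n → U × V, seqProb p w = 1 := by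
    show ∑ w : Fin n → U × V, ∏ i, p (w i) = 1
    rw [sum_pi_prod_s3 (fun _ a => p a)]
    simp [hp1]
  have hP0 : ∀ w : Fin n → U × V, 0 ≤ seqProb p w :=
    fun w => Finset.prod_nonneg fun i _ => hp0 _
  set A := ∑ w : Fin n → U × V,
    (if ((fun i => (w i).1, fun i => (w i).2) ∈ jointTypicalSet p n ε)
      then seqProb p w else 0) with hA
  -- A is large
  have hAlarge : 1 - ε^2 ≤ A := by
    have hpoint : ∀ w : Fin n → U × V,
        seqProb p w - (if ((fun i => (w i).1, fun i => (w i).2) ∈ jointTypicalSet p n ε)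
            then seqProb p w else 0)
        ≤ (if (0 < ∏ i, p (w i) ∧
              ε < |(-(1/(n:ℝ))) * logb 2 (∏ i, margU p ((w i).1)) - ent (margU p)|)
            then ∏ i, p (w i) else 0)
          + (if (0 < ∏ i, p (w i) ∧
              ε < |(-(1/(n:ℝ))) * logb 2 (∏ i, margV p ((w i).2)) - ent (margV p)|)
            then ∏ i, p (w i) else 0)
          + (if (0 < ∏ i, p (w i) ∧
              ε < |(-(1/(n:ℝ))) * logb 2 (∏ i, p (w i)) - ent p|)
            then ∏ i, p (w i) else 0) := by
      intro w
      have hq : (0:ℝ) ≤ ∏ i, p (w i) := hP0 w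
      have hr1 : (0:ℝ) ≤ (if (0 < ∏ i, p (w i) ∧
          ε < |(-(1/(n:ℝ))) * logb 2 (∏ i, margU p ((w i).1)) - ent (margU p)|)
          then ∏ i, p (w i) else 0) := by split_ifs <;> simp [hq]
      have hr2 : (0:ℝ) ≤ (if (0 < ∏ i, p (w i) ∧
          ε < |(-(1/(n:ℝ))) * logb 2 (∏ i, margV p ((w i).2)) - ent (margV p)|)
          then ∏ i, p (w i) else 0) := by split_ifs <;> simp [hq]
      have hr3 : (0:ℝ) ≤ (if (0 < ∏ i, p (w i) ∧
          ε < |(-(1/(n:ℝ))) * logb 2 (∏ i, p (w i)) - ent p|)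
          then ∏ i, p (w i) else 0) := by split_ifs <;> simp [hq]
      by_cases hJ : ((fun i => (w i).1, fun i => (w i).2) ∈ jointTypicalSet p n ε)
      · rw [if_pos hJ, sub_self]; linarith
      · rw [if_neg hJ, sub_zero]
        rcases hq.lt_or_eq with hpos | hzero
        · -- all positivity conditions hold
          have hqw : seqProb p w = ∏ i, p (w i) := rfl
          have hpw : ∀ i, 0 < p (w i) := by
            intro i
            rcases (hp0 (w i)).lt_or_eq with h | h
            · exact h
            · exact absurd (Finset.prod_eq_zero (Finset.mem_univ i) h.symm) hpos.ne'
          have hjointProd : seqProb p (fun i => ((w i).1, (w i).2)) = ∏ i, p (w i) := by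
            show (∏ i, p ((w i).1, (w i).2)) = ∏ i, p (w i)
            apply Finset.prod_congr rfl; intro i _; simp
          have c1 : 0 < seqProb (margU p) (fun i => (w i).1) :=
            Finset.prod_pos fun i _ => hmUpos (w i) (hpw i)
          have c2 : 0 < seqProb (margV p) (fun i => (w i).2) :=
            Finset.prod_pos fun i _ => hmVpos (w i) (hpw i)
          have c3 : 0 < seqProb p (fun i => ((w i).1, (w i).2)) := by
            rw [hjointProd]; exact hpos
          have hQ1 : seqProb (margU p) (fun i => (w i).1) = ∏ i, margU p ((w i).1) := rfl
          have hQ2 : seqProb (margV p) (fun i => (w i).2) = ∏ i, margV p ((w i).2) := rfl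
          by_cases h4 : |(-(1/(n:ℝ))) * logb 2 (∏ i, margU p ((w i).1)) - ent (margU p)| ≤ ε
          · by_cases h5 : |(-(1/(n:ℝ))) * logb 2 (∏ i, margV p ((w i).2)) - ent (margV p)| ≤ ε
            · -- then the joint condition must fail
              have h6 : ¬ |(-(1/(n:ℝ))) * logb 2 (∏ i, p (w i)) - ent p| ≤ ε := by
                intro h6
                apply hJ
                refine ⟨c1, c2, c3, ?_, ?_, ?_⟩
                · rw [hQ1]; rw [show -(1 / (n:ℝ)) = (-(1/(n:ℝ))) from rfl]; exact h4
                · exact h5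
                · rw [hjointProd]; exact h6
              have e3' : (if (0 < ∏ i, p (w i) ∧
                  ε < |(-(1/(n:ℝ))) * logb 2 (∏ i, p (w i)) - ent p|)
                  then ∏ i, p (w i) else 0) = ∏ i, p (w i) :=
                if_pos ⟨hpos, not_le.1 h6⟩
              rw [e3']
              linarith
            · have e2' : (if (0 < ∏ i, p (w i) ∧
                  ε < |(-(1/(n:ℝ))) * logb 2 (∏ i, margV p ((w i).2)) - ent (margV p)|)
                  then ∏ i, p (w i) else 0) = ∏ i, p (w i) :=
                if_pos ⟨hpos, not_le.1 h5⟩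
              rw [e2']
              linarith
          · have e1' : (if (0 < ∏ i, p (w i) ∧
                ε < |(-(1/(n:ℝ))) * logb 2 (∏ i, margU p ((w i).1)) - ent (margU p)|)
                then ∏ i, p (w i) else 0) = ∏ i, p (w i) :=
              if_pos ⟨hpos, not_le.1 h4⟩
            rw [e1']
            linarith
        · rw [show seqProb p w = ∏ i, p (w i) from rfl, ← hzero]
          refine add_nonneg (add_nonneg ?_ ?_) ?_ <;> split_ifs <;> norm_num
    have hchain : 1 - A ≤ (W1 + W2 + W3) / ((n:ℝ) * ε^2) := by
      calc 1 - A
          = ∑ w : Fin n → U × V, (seqProb p w -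
              (if ((fun i => (w i).1, fun i => (w i).2) ∈ jointTypicalSet p n ε)
                then seqProb p w else 0)) := by
            rw [Finset.sum_sub_distrib, hPsum, hA]
        _ ≤ ∑ w : Fin n → U × V,
            ((if (0 < ∏ i, p (w i) ∧
                ε < |(-(1/(n:ℝ))) * logb 2 (∏ i, margU p ((w i).1)) - ent (margU p)|)
              then ∏ i, p (w i) else 0)
            + (if (0 < ∏ i, p (w i) ∧
                ε < |(-(1/(n:ℝ))) * logb 2 (∏ i, margV p ((w i).2)) - ent (margV p)|)
              then ∏ i, p (w i) else 0)
            + (if (0 < ∏ i, p (w i) ∧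
                ε < |(-(1/(n:ℝ))) * logb 2 (∏ i, p (w i)) - ent p|)
              then ∏ i, p (w i) else 0)) :=
            Finset.sum_le_sum fun w _ => hpoint w
        _ = (∑ w : Fin n → U × V, (if (0 < ∏ i, p (w i) ∧
                ε < |(-(1/(n:ℝ))) * logb 2 (∏ i, margU p ((w i).1)) - ent (margU p)|)
              then ∏ i, p (w i) else 0))
            + (∑ w : Fin n → U × V, (if (0 < ∏ i, p (w i) ∧
                ε < |(-(1/(n:ℝ))) * logb 2 (∏ i, margV p ((w i).2)) - ent (margV p)|)
              then ∏ i, p (w i) else 0))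
            + (∑ w : Fin n → U × V, (if (0 < ∏ i, p (w i) ∧
                ε < |(-(1/(n:ℝ))) * logb 2 (∏ i, p (w i)) - ent p|)
              then ∏ i, p (w i) else 0)) := by
            rw [Finset.sum_add_distrib, Finset.sum_add_distrib]
        _ ≤ W1 / ((n:ℝ) * ε^2) + W2 / ((n:ℝ) * ε^2) + W3 / ((n:ℝ) * ε^2) := by
            refine add_le_add (add_le_add ?_ ?_) ?_
            · exact hD1
            · exact hD2
            · exact hD3
        _ = (W1 + W2 + W3) / ((n:ℝ) * ε^2) := by rw [← add_div, ← add_div]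
    have hfinal : (W1 + W2 + W3) / ((n:ℝ) * ε^2) ≤ ε^2 := by
      rw [div_le_iff₀ (by positivity)]
      have h5 : W1 + W2 + W3 ≤ (M:ℝ) * ε^4 := by
        rw [div_le_iff₀ (by positivity)] at hM
        linarith
      have h4 : (M:ℝ) * ε^4 ≤ (n:ℝ) * ε^4 :=
        mul_le_mul_of_nonneg_right hnM (by positivity)
      have h6 : (n:ℝ) * ε^4 = ε^2 * ((n:ℝ) * ε^2) := by ring
      linarith
    linarith
  -- rewrite A as a sum over u
  have hAeq : A = ∑ u : Fin n → U, seqProb (margU p) u *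
      (∑ v : Fin n → V, if (u, v) ∈ jointTypicalSet p n ε
        then ∏ i, condVU p (u i) (v i) else 0) := by
    rw [hA]
    have hpt : ∀ w : Fin n → U × V,
        (if ((fun i => (w i).1, fun i => (w i).2) ∈ jointTypicalSet p n ε)
          then seqProb p w else 0)
        = (fun uv : (Fin n → U) × (Fin n → V) =>
            if uv ∈ jointTypicalSet p n ε
              then seqProb (margU p) uv.1 * ∏ i, condVU p (uv.1 i) (uv.2 i) else 0)
          ((Equiv.arrowProdEquivProdArrow (Fin n) (fun _ => U) (fun _ => V)) w) := by
      intro w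
      show _ = (if ((fun i => (w i).1, fun i => (w i).2) ∈ jointTypicalSet p n ε)
          then seqProb (margU p) (fun i => (w i).1) * ∏ i, condVU p ((w i).1) ((w i).2) else 0)
      by_cases hJ : ((fun i => (w i).1, fun i => (w i).2) ∈ jointTypicalSet p n ε)
      · rw [if_pos hJ, if_pos hJ]
        have hjpos : 0 < seqProb p (fun i => ((w i).1, (w i).2)) := hJ.2.2.1
        have hpw : ∀ i, 0 < p ((w i).1, (w i).2) := by
          intro i
          rcases (hp0 ((w i).1, (w i).2)).lt_or_eq with h | h
          · exact h
          · exact absurd (Finset.prod_eq_zero (Finset.mem_univ i) h.symm) hjpos.ne'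
        have hfac : ∀ i : Fin n, p (w i)
            = margU p ((w i).1) * condVU p ((w i).1) ((w i).2) := by
          intro i
          have hmpos : margU p ((w i).1) ≠ 0 := by
            have := hmUpos ((w i).1, (w i).2) (hpw i)
            simpa using this.ne'
          have hcc : margU p ((w i).1) * condVU p ((w i).1) ((w i).2)
              = p ((w i).1, (w i).2) := by
            rw [condVU, mul_comm, div_mul_cancel₀ _ hmpos]
          rw [hcc]
        show (∏ i, p (w i)) = (∏ i, margU p ((w i).1)) * ∏ i, condVU p ((w i).1) ((w i).2)
        rw [← Finset.prod_mul_distrib]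
        exact Finset.prod_congr rfl fun i _ => hfac i
      · rw [if_neg hJ, if_neg hJ]
    calc ∑ w : Fin n → U × V,
          (if ((fun i => (w i).1, fun i => (w i).2) ∈ jointTypicalSet p n ε)
            then seqProb p w else 0)
        = ∑ w : Fin n → U × V,
            (fun uv : (Fin n → U) × (Fin n → V) =>
              if uv ∈ jointTypicalSet p n ε
                then seqProb (margU p) uv.1 * ∏ i, condVU p (uv.1 i) (uv.2 i) else 0)
            ((Equiv.arrowProdEquivProdArrow (Fin n) (fun _ => U) (fun _ => V)) w) :=
          Finset.sum_congr rfl fun w _ => hpt w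
      _ = ∑ uv : (Fin n → U) × (Fin n → V),
            (if uv ∈ jointTypicalSet p n ε
              then seqProb (margU p) uv.1 * ∏ i, condVU p (uv.1 i) (uv.2 i) else 0) :=
          Fintype.sum_equiv (Equiv.arrowProdEquivProdArrow (Fin n) (fun _ => U) (fun _ => V)) _ _ (fun w => rfl)
      _ = ∑ u : Fin n → U, ∑ v : Fin n → V,
            (if (u, v) ∈ jointTypicalSet p n ε
              then seqProb (margU p) u * ∏ i, condVU p (u i) (v i) else 0) := by
          rw [Fintype.sum_prod_type]
      _ = ∑ u : Fin n → U, seqProb (margU p) u *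
            (∑ v : Fin n → V, if (u, v) ∈ jointTypicalSet p n ε
              then ∏ i, condVU p (u i) (v i) else 0) := by
          apply Finset.sum_congr rfl; intro u _
          rw [Finset.mul_sum]
          apply Finset.sum_congr rfl; intro v _
          split_ifs <;> simp
  -- the good finset
  set Bf : Finset (Fin n → U) :=
    Finset.univ.filter (fun u => u ∈ BtypicalSet p n ε) with hBf
  set c : (Fin n → U) → ℝ := fun u =>
    ∑ v : Fin n → V, if (u, v) ∈ jointTypicalSet p n ε
      then ∏ i, condVU p (u i) (v i) else 0 with hcdef
  have hcond0 : ∀ (a : U) (b : V), 0 ≤ condVU p a b :=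
    fun a b => div_nonneg (hp0 _) (hmU0 _)
  have hc0 : ∀ u, 0 ≤ c u := by
    intro u
    apply Finset.sum_nonneg
    intro v _
    split_ifs
    · exact Finset.prod_nonneg fun i _ => hcond0 _ _
    · exact le_refl 0
  have hc1 : ∀ u, c u ≤ 1 := by
    intro u
    have step1 : c u ≤ ∑ v : Fin n → V, ∏ i, condVU p (u i) (v i) := by
      apply Finset.sum_le_sum
      intro v _
      split_ifs
      · exact le_refl _
      · exact Finset.prod_nonneg fun i _ => hcond0 _ _
    have step2 : (∑ v : Fin n → V, ∏ i, condVU p (u i) (v i))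
        = ∏ i, ∑ b, condVU p (u i) b := sum_pi_prod_s3 (fun i b => condVU p (u i) b)
    have step3 : (∏ i, ∑ b, condVU p (u i) b) ≤ 1 := by
      apply Finset.prod_le_one
      · intro i _
        exact Finset.sum_nonneg fun b _ => hcond0 _ _
      · intro i _
        have hsum : (∑ b, condVU p (u i) b) = margU p (u i) / margU p (u i) := by
          simp only [condVU]
          rw [← Finset.sum_div]
          rfl
        rcases (hmU0 (u i)).eq_or_lt with h | h
        · rw [hsum, ← h]; simp
        · rw [hsum, div_self h.ne']
    calc c u ≤ _ := step1
      _ = _ := step2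
      _ ≤ 1 := step3
  have hQ0 : ∀ u : Fin n → U, 0 ≤ seqProb (margU p) u :=
    fun u => Finset.prod_nonneg fun i _ => hmU0 _
  have hQsum : ∑ u : Fin n → U, seqProb (margU p) u = 1 := by
    show ∑ u : Fin n → U, ∏ i, margU p (u i) = 1
    rw [sum_pi_prod_s3 (fun _ a => margU p a)]
    have hmg : ∑ a, margU p a = 1 := by
      calc ∑ a, margU p a = ∑ a, ∑ b, p (a, b) := rfl
        _ = ∑ x : U × V, p x := (Fintype.sum_prod_type _).symm
        _ = 1 := hp1
    simp [hmg]
  have htypJ : ∀ (u : Fin n → U) (v : Fin n → V),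
      (u, v) ∈ jointTypicalSet p n ε → u ∈ typicalSet (margU p) n ε :=
    fun u v h => ⟨h.1, h.2.2.2.1⟩
  have hcB : ∀ u, u ∉ Bf → c u ≤ 1 - ε := by
    intro u hu
    rw [hBf] at hu
    simp only [Finset.mem_filter, Finset.mem_univ, true_and] at hu
    by_cases ht : u ∈ typicalSet (margU p) n ε
    · by_contra hcon
      push_neg at hcon
      apply hu
      exact ⟨ht, hcon.le⟩
    · have hz : c u = 0 := Finset.sum_eq_zero fun v _ =>
        if_neg (fun hJ => ht (htypJ u v hJ))
      rw [hz]; linarith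
  have hAle : A ≤ (∑ u ∈ Bf, seqProb (margU p) u)
      + (1 - ε) * ∑ u ∈ Finset.univ.filter (fun u => ¬ u ∈ BtypicalSet p n ε),
          seqProb (margU p) u := by
    have hAc : A = (∑ u ∈ Bf, seqProb (margU p) u * c u)
        + ∑ u ∈ Finset.univ.filter (fun u => ¬ u ∈ BtypicalSet p n ε),
            seqProb (margU p) u * c u := by
      rw [hAeq, hBf, Finset.sum_filter_add_sum_filter_not]
    rw [hAc]
    apply add_le_add
    · apply Finset.sum_le_sum; intro u _
      exact mul_le_of_le_one_right (hQ0 u) (hc1 u)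
    · rw [Finset.mul_sum]
      apply Finset.sum_le_sum; intro u hu
      have hu' : u ∉ Bf := by
        rw [hBf]
        simp only [Finset.mem_filter, Finset.mem_univ, true_and]
        simpa using (Finset.mem_filter.1 hu).2
      calc seqProb (margU p) u * c u ≤ seqProb (margU p) u * (1 - ε) :=
            mul_le_mul_of_nonneg_left (hcB u hu') (hQ0 u)
        _ = (1 - ε) * seqProb (margU p) u := mul_comm _ _
  have hsum2 : (∑ u ∈ Bf, seqProb (margU p) u)
      + (∑ u ∈ Finset.univ.filter (fun u => ¬ u ∈ BtypicalSet p n ε),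
          seqProb (margU p) u) = 1 := by
    rw [hBf, Finset.sum_filter_add_sum_filter_not]
    exact hQsum
  have htnn : 0 ≤ ∑ u ∈ Finset.univ.filter (fun u => ¬ u ∈ BtypicalSet p n ε),
      seqProb (margU p) u :=
    Finset.sum_nonneg fun u _ => hQ0 u
  have hQB : 1 - ε ≤ ∑ u ∈ Bf, seqProb (margU p) u := by
    nlinarith [hAlarge, hAle, hsum2, hε]
  have hcard : ∀ u ∈ Bf, seqProb (margU p) u
      ≤ (2:ℝ) ^ (-((n:ℝ) * (ent (margU p) - ε))) := by
    intro u hu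
    rw [hBf] at hu
    have hB : u ∈ BtypicalSet p n ε := (Finset.mem_filter.1 hu).2
    obtain ⟨⟨hQpos, habs⟩, -⟩ := hB
    have h1 : -ε ≤ -(1/(n:ℝ)) * logb 2 (seqProb (margU p) u) - ent (margU p) :=
      (abs_le.1 habs).1
    have hninv : (n:ℝ) * (1/(n:ℝ)) = 1 := mul_one_div_cancel hn'.ne'
    have hL : logb 2 (seqProb (margU p) u) ≤ -((n:ℝ) * (ent (margU p) - ε)) := by
      have h2 : (1/(n:ℝ)) * logb 2 (seqProb (margU p) u) ≤ ε - ent (margU p) := by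
        linarith
      have h3 := mul_le_mul_of_nonneg_left h2 hn'.le
      rw [← mul_assoc, hninv, one_mul] at h3
      linarith
    calc seqProb (margU p) u = (2:ℝ) ^ (logb 2 (seqProb (margU p) u)) :=
          (Real.rpow_logb two_pos (by norm_num) hQpos).symm
      _ ≤ (2:ℝ) ^ (-((n:ℝ) * (ent (margU p) - ε))) :=
          Real.rpow_le_rpow_of_exponent_le one_le_two hL
  have hsumcard : ∑ u ∈ Bf, seqProb (margU p) u
      ≤ (Bf.card : ℝ) * (2:ℝ) ^ (-((n:ℝ) * (ent (margU p) - ε))) := by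
    have := Finset.sum_le_card_nsmul Bf _ _ hcard
    simpa [nsmul_eq_mul] using this
  have hset : BtypicalSet p n ε = ↑Bf := by
    rw [hBf]; ext u; simp
  rw [hset, Set.ncard_coe_finset]
  have h2x : (0:ℝ) < (2:ℝ) ^ ((n:ℝ) * (ent (margU p) - ε)) :=
    Real.rpow_pos_of_pos two_pos _
  have hkey : (2:ℝ) ^ (-((n:ℝ) * (ent (margU p) - ε)))
      * (2:ℝ) ^ ((n:ℝ) * (ent (margU p) - ε)) = 1 := by
    rw [← Real.rpow_add two_pos]; simp
  have hmul := mul_le_mul_of_nonneg_right (le_trans hQB hsumcard) h2x.le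
  rw [mul_assoc, hkey, mul_one] at hmul
  exact hmul
end
end

section
/- Second error event bound in the proof of Theorem 1: for every ε > 0 there exists N such that for all n ≥ N the average (over a uniformly random sign codebook) probability that some other codeword is jointly typical with the channel output is bounded as ∑_{a⃗ ∈ 𝔅} (1/|𝔅|) ∑_{s⃗ ∈ 𝒮ⁿ} 2^{−n} ∑_{y⃗ ∈ 𝒴ⁿ} p(y⃗ | (s⃗,a⃗)) ∑_{ã⃗ ∈ 𝔅, ã⃗ ≠ a⃗} ∑_{s̃⃗ ∈ 𝒮ⁿ} 2^{−n}·1[(ã⃗, s̃⃗, y⃗) ∈ A^n_ε(ASY)] ≤ 2^{n(H(A) − I(X;Y) + 10ε)}, where 𝔅 = B^n_{(S,Y),ε}(A), p(y⃗|(s⃗,a⃗)) = ∏_{i=1}^n p(y_i|(s_i,a_i)), and 1[·] is the indicator function. -/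
open Real
open scoped BigOperators Classical

noncomputable section

/-- The sign alphabet `𝒮 = {-1, +1}`. -/
inductive Sign : Type
  | neg  -- the sign `-1`
  | pos  -- the sign `+1`
  deriving DecidableEq

instance : Fintype Sign :=
  ⟨{Sign.neg, Sign.pos}, fun x => by cases x <;> simp⟩

variable {U V : Type*} [Fintype U] [Fintype V]

variable {A Y : Type*} [Fintype A] [Fintype Y]

/-- Input pmf `p(x) = p(s,a) = (1/2)·p(a)` : uniform sign, independent amplitude. -/
def inputPMF (p : A → ℝ) : Sign × A → ℝ := fun x => p x.2 / 2

/-- Output pmf `p(y) = ∑_x p(x)·p(y|x)`. -/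
def outputPMF (W : Sign × A → Y → ℝ) (p : A → ℝ) : Y → ℝ :=
  fun y => ∑ x : Sign × A, inputPMF p x * W x y

/-- Mutual information `I(X;Y)` in bits, with `X = (S,A)`. -/
def mutualInfo (W : Sign × A → Y → ℝ) (p : A → ℝ) : ℝ :=
  ∑ x : Sign × A, ∑ y : Y,
    inputPMF p x * W x y * logb 2 (W x y / outputPMF W p y)

/-- Uniform pmf of the sign `S`. -/
def signPMF : Sign → ℝ := fun _ => 1 / 2

/-- Joint pmf `p(a,s,y) = p(a)·(1/2)·p(y|(s,a))` on `A × Sign × Y`. -/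
def jointASY (W : Sign × A → Y → ℝ) (p : A → ℝ) : A × Sign × Y → ℝ :=
  fun z => p z.1 * (1 / 2 : ℝ) * W (z.2.1, z.1) z.2.2

/-- Joint pmf of the pair `(A, (S,Y))`, pairing `A` with the composite `(S,Y)`. -/
def pairASY (W : Sign × A → Y → ℝ) (p : A → ℝ) : A × (Sign × Y) → ℝ :=
  fun z => p z.1 * (1 / 2 : ℝ) * W (z.2.1, z.1) z.2.2

/-- The jointly typical set `A^n_ε(ASY)` of triples of length-`n` sequences: the
empirical log-probability rate of each single coordinate process (`A`, `S` and `Y`)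
and of the full joint process is within `ε` of the corresponding entropy. -/
def tripleTypicalSet (W : Sign × A → Y → ℝ) (p : A → ℝ) (n : ℕ) (ε : ℝ) :
    Set ((Fin n → A) × (Fin n → Sign) × (Fin n → Y)) :=
  {asy | 0 < seqProb p asy.1 ∧ 0 < seqProb signPMF asy.2.1 ∧
    0 < seqProb (outputPMF W p) asy.2.2 ∧
    0 < seqProb (jointASY W p) (fun i => (asy.1 i, asy.2.1 i, asy.2.2 i)) ∧
    |(-(1 / (n : ℝ)) * logb 2 (seqProb p asy.1)) - ent p| ≤ ε ∧
    |(-(1 / (n : ℝ)) * logb 2 (seqProb signPMF asy.2.1)) - ent signPMF| ≤ ε ∧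
    |(-(1 / (n : ℝ)) * logb 2 (seqProb (outputPMF W p) asy.2.2)) - ent (outputPMF W p)| ≤ ε ∧
    |(-(1 / (n : ℝ)) *
        logb 2 (seqProb (jointASY W p) (fun i => (asy.1 i, asy.2.1 i, asy.2.2 i)))) -
      ent (jointASY W p)| ≤ ε}

set_option linter.unusedSectionVars false
lemma sum_fn_prod {α : Type*} [Fintype α] {n : ℕ} (f : Fin n → α → ℝ) :
    ∑ u : Fin n → α, ∏ i, f i (u i) = ∏ i, ∑ a, f i a := by
  rw [Finset.prod_univ_sum, Fintype.piFinset_univ]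

lemma seqProb_ge {α : Type*} [Fintype α] (p : α → ℝ) {n : ℕ} (hn : 1 ≤ n) {u : Fin n → α}
    {ε H : ℝ} (hpos : 0 < ∏ i, p (u i))
    (h : |(-(1 / (n : ℝ)) * logb 2 (∏ i, p (u i))) - H| ≤ ε) :
    (2:ℝ) ^ (-(n:ℝ) * (H + ε)) ≤ ∏ i, p (u i) := by
  have hn' : (0:ℝ) < n := by exact_mod_cast hn
  set L := logb 2 (∏ i, p (u i)) with hL
  have h2 := (abs_le.mp h).2
  have h3 : -L / (n:ℝ) ≤ H + ε := by
    have : -(1 / (n:ℝ)) * L = -L / n := by ring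
    linarith [this ▸ h2]
  have hle : -(n:ℝ) * (H + ε) ≤ L := by
    have := (div_le_iff₀ hn').mp h3
    nlinarith
  calc (2:ℝ) ^ (-(n:ℝ) * (H + ε)) ≤ (2:ℝ) ^ L :=
        (Real.rpow_le_rpow_left_iff one_lt_two).mpr hle
    _ = _ := Real.rpow_logb two_pos (by norm_num) hpos

lemma seqProb_le' {α : Type*} [Fintype α] (p : α → ℝ) {n : ℕ} (hn : 1 ≤ n) {u : Fin n → α}
    {ε H : ℝ} (hpos : 0 < ∏ i, p (u i))
    (h : |(-(1 / (n : ℝ)) * logb 2 (∏ i, p (u i))) - H| ≤ ε) :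
    ∏ i, p (u i) ≤ (2:ℝ) ^ (-(n:ℝ) * (H - ε)) := by
  have hn' : (0:ℝ) < n := by exact_mod_cast hn
  set L := logb 2 (∏ i, p (u i)) with hL
  have h2 := (abs_le.mp h).1
  have h3 : H - ε ≤ -L / (n:ℝ) := by
    have : -(1 / (n:ℝ)) * L = -L / n := by ring
    linarith [this ▸ h2]
  have hle : L ≤ -(n:ℝ) * (H - ε) := by
    have := (le_div_iff₀ hn').mp h3
    nlinarith
  calc ∏ i, p (u i) = (2:ℝ) ^ L := (Real.rpow_logb two_pos (by norm_num) hpos).symm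
    _ ≤ _ := (Real.rpow_le_rpow_left_iff one_lt_two).mpr hle

section Aux
variable {A Y : Type*} [Fintype A] [Fintype Y]

lemma sum_sign (f : Sign → ℝ) : ∑ s : Sign, f s = f .neg + f .pos := by
  show ∑ s ∈ (Finset.univ : Finset Sign), f s = _
  have : (Finset.univ : Finset Sign) = {Sign.neg, Sign.pos} := rfl
  rw [this, Finset.sum_pair (by simp)]

-- marginal of jointASY over (a,s) is outputPMF
lemma jointASY_marg (W : Sign × A → Y → ℝ) (p : A → ℝ) (y : Y) :
    ∑ a : A, ∑ s : Sign, jointASY W p (a, s, y) = outputPMF W p y := by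
  rw [outputPMF, Fintype.sum_prod_type, Finset.sum_comm]
  simp [jointASY, inputPMF]
  apply Finset.sum_congr rfl; intro s _
  apply Finset.sum_congr rfl; intro a _
  ring

-- marginal over (s,y) is p a
lemma jointASY_marg2 (W : Sign × A → Y → ℝ) (p : A → ℝ) (hW1 : ∀ x, ∑ y, W x y = 1) (a : A) :
    ∑ s : Sign, ∑ y : Y, jointASY W p (a, s, y) = p a := by
  simp only [jointASY]
  have : ∀ s : Sign, ∑ y : Y, p a * (1/2 : ℝ) * W (s, a) y = p a * (1/2) := by
    intro s
    rw [← Finset.mul_sum, hW1]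
    ring
  rw [sum_sign]
  simp only [this]
  ring

lemma jointASY_sum_one (W : Sign × A → Y → ℝ) (p : A → ℝ) (hW1 : ∀ x, ∑ y, W x y = 1)
    (hp1 : ∑ a, p a = 1) :
    ∑ z : A × Sign × Y, jointASY W p z = 1 := by
  rw [Fintype.sum_prod_type]
  have : ∀ a : A, ∑ z : Sign × Y, jointASY W p (a, z) = p a := by
    intro a
    rw [Fintype.sum_prod_type]
    exact jointASY_marg2 W p hW1 a
  simp only [this, hp1]


lemma mutualInfo_eq_ent (W : Sign × A → Y → ℝ) (hW0 : ∀ x y, 0 ≤ W x y) (hW1 : ∀ x, ∑ y, W x y = 1)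
    (p : A → ℝ) (hp0 : ∀ a, 0 ≤ p a) (hp1 : ∑ a, p a = 1) :
    mutualInfo W p = ent p + 1 + ent (outputPMF W p) - ent (jointASY W p) := by
  set q := jointASY W p with hq
  set py := outputPMF W p with hpy
  have hq0 : ∀ z, 0 ≤ q z := fun z => by
    simp only [hq, jointASY]
    have := hp0 z.1; have := hW0 (z.2.1, z.1) z.2.2; positivity
  have hpy0 : ∀ y, 0 ≤ py y := fun y => by
    simp only [hpy, outputPMF, inputPMF]
    apply Finset.sum_nonneg; intro x _
    have := hp0 x.2; have := hW0 x y; positivity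
  -- mutualInfo as sum over triples
  have hmi : mutualInfo W p
      = ∑ a : A, ∑ s : Sign, ∑ y : Y, q (a, s, y) * logb 2 (W (s, a) y / py y) := by
    rw [mutualInfo, Fintype.sum_prod_type, Finset.sum_comm]
    apply Finset.sum_congr rfl; intro a _
    apply Finset.sum_congr rfl; intro s _
    apply Finset.sum_congr rfl; intro y _
    simp only [hq, jointASY, inputPMF, hpy]
    ring
  -- termwise expansion
  have hterm : ∀ a s y, q (a, s, y) * logb 2 (W (s, a) y / py y)
      = q (a, s, y) * logb 2 (q (a, s, y)) - q (a, s, y) * logb 2 (p a)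
        + q (a, s, y) - q (a, s, y) * logb 2 (py y) := by
    intro a s y
    rcases eq_or_lt_of_le (hq0 (a, s, y)) with h0 | hpos
    · rw [← h0]; ring
    · have hqv : q (a, s, y) = p a * (1/2 : ℝ) * W (s, a) y := rfl
      have hpa : 0 < p a := by
        rcases (hp0 a).lt_or_eq with h | h
        · exact h
        · exfalso; rw [hqv, ← h] at hpos; simp at hpos
      have hWp : 0 < W (s, a) y := by
        rcases (hW0 (s, a) y).lt_or_eq with h | h
        · exact h
        · exfalso; rw [hqv, ← h] at hpos; simp at hpos
      have hpyp : 0 < py y := by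
        have hle : q (a, s, y) ≤ py y := by
          show q (a, s, y) ≤ outputPMF W p y
          rw [← jointASY_marg W p y]
          calc q (a, s, y) ≤ ∑ s' : Sign, jointASY W p (a, s', y) := by
                rw [sum_sign]
                cases s
                · have := hq0 (a, Sign.pos, y); simp only [hq] at this ⊢; linarith
                · have := hq0 (a, Sign.neg, y); simp only [hq] at this ⊢; linarith
            _ ≤ _ := Finset.single_le_sum (f := fun a' => ∑ s' : Sign, jointASY W p (a', s', y))
                (fun a' _ => by
                  show (0:ℝ) ≤ ∑ s' : Sign, jointASY W p (a', s', y)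
                  rw [sum_sign]
                  have := hq0 (a', Sign.neg, y); have := hq0 (a', Sign.pos, y)
                  simp only [hq] at *; linarith)
                (Finset.mem_univ a)
        linarith
      have e1 : logb 2 (W (s, a) y / py y) = logb 2 (W (s, a) y) - logb 2 (py y) :=
        Real.logb_div hWp.ne' hpyp.ne'
      have e2 : logb 2 (q (a, s, y)) = logb 2 (p a) + logb 2 (1/2 : ℝ) + logb 2 (W (s, a) y) := by
        rw [hqv, Real.logb_mul (by positivity) hWp.ne', Real.logb_mul hpa.ne' (by norm_num)]
      have e3 : logb 2 (1/2 : ℝ) = -1 := by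
        rw [one_div, Real.logb_inv, Real.logb_self_eq_one] <;> norm_num
      rw [e1, e2, e3]; ring
  have S1 : ∑ a : A, ∑ s : Sign, ∑ y : Y, q (a, s, y) * logb 2 (q (a, s, y)) = -ent q := by
    simp [ent, Fintype.sum_prod_type]
  have S2 : ∑ a : A, ∑ s : Sign, ∑ y : Y, q (a, s, y) * logb 2 (p a) = -ent p := by
    have : ∀ a : A, ∑ s : Sign, ∑ y : Y, q (a, s, y) * logb 2 (p a)
        = p a * logb 2 (p a) := by
      intro a
      rw [show (∑ s : Sign, ∑ y : Y, q (a, s, y) * logb 2 (p a))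
          = (∑ s : Sign, ∑ y : Y, q (a, s, y)) * logb 2 (p a) by
        rw [Finset.sum_mul]
        exact Finset.sum_congr rfl fun s _ => (Finset.sum_mul ..).symm]
      rw [hq, jointASY_marg2 W p hW1 a]
    simp only [this, ent]
    simp
  have S3 : ∑ a : A, ∑ s : Sign, ∑ y : Y, q (a, s, y) = 1 := by
    have := jointASY_sum_one W p hW1 hp1
    rw [Fintype.sum_prod_type] at this
    simpa [Fintype.sum_prod_type] using this
  have S4 : ∑ a : A, ∑ s : Sign, ∑ y : Y, q (a, s, y) * logb 2 (py y) = -ent py := by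
    have swap : ∑ a : A, ∑ s : Sign, ∑ y : Y, q (a, s, y) * logb 2 (py y)
        = ∑ y : Y, ∑ a : A, ∑ s : Sign, q (a, s, y) * logb 2 (py y) := by
      rw [show (∑ a : A, ∑ s : Sign, ∑ y : Y, q (a, s, y) * logb 2 (py y))
          = ∑ a : A, ∑ y : Y, ∑ s : Sign, q (a, s, y) * logb 2 (py y) from
        Finset.sum_congr rfl fun a _ => Finset.sum_comm]
      exact Finset.sum_comm
    rw [swap]
    have : ∀ y : Y, ∑ a : A, ∑ s : Sign, q (a, s, y) * logb 2 (py y)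
        = py y * logb 2 (py y) := by
      intro y
      rw [show (∑ a : A, ∑ s : Sign, q (a, s, y) * logb 2 (py y))
          = (∑ a : A, ∑ s : Sign, q (a, s, y)) * logb 2 (py y) by
        rw [Finset.sum_mul]
        exact Finset.sum_congr rfl fun a _ => (Finset.sum_mul ..).symm]
      rw [hq, jointASY_marg W p y]
    simp only [this, ent]
    simp
  rw [hmi]
  simp only [hterm]
  simp only [Finset.sum_sub_distrib, Finset.sum_add_distrib]
  rw [S1, S2, S3, S4]
  ring

lemma seq_marg (W : Sign × A → Y → ℝ) (p : A → ℝ) {n : ℕ} (y : Fin n → Y) :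
    ∑ a' : Fin n → A, ∑ s' : Fin n → Sign, (∏ i, jointASY W p (a' i, s' i, y i))
      = ∏ i, outputPMF W p (y i) := by
  have step1 : ∀ a' : Fin n → A,
      ∑ s' : Fin n → Sign, (∏ i, jointASY W p (a' i, s' i, y i))
        = ∏ i, ∑ σ : Sign, jointASY W p (a' i, σ, y i) :=
    fun a' => sum_fn_prod (fun i σ => jointASY W p (a' i, σ, y i))
  simp only [step1]
  rw [sum_fn_prod (fun i α => ∑ σ : Sign, jointASY W p (α, σ, y i))]
  exact Finset.prod_congr rfl fun i _ => jointASY_marg W p (y i)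

end Aux

/-- **Second error event bound in the proof of Theorem 1**: for every `ε > 0` there is
`N` such that for all `n ≥ N`, the average (over a uniformly random sign codebook)
probability that some other codeword is jointly typical with the channel output is at
most `2^{n(H(A) - I(X;Y) + 10ε)}`, where the amplitude codebook is the B-typical set
`𝔅 = B^n_{(S,Y),ε}(A)`. -/
theorem second_error_event_bound_SMD
    (W : Sign × A → Y → ℝ) (hW0 : ∀ x y, 0 ≤ W x y) (hW1 : ∀ x, ∑ y, W x y = 1)
    (p : A → ℝ) (hp0 : ∀ a, 0 ≤ p a) (hp1 : ∑ a, p a = 1)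
    (ε : ℝ) (hε : 0 < ε) :
    ∃ N : ℕ, ∀ n : ℕ, N ≤ n →
      (∑ a : Fin n → A,
        (if a ∈ BtypicalSet (pairASY W p) n ε then
          (1 / ((BtypicalSet (pairASY W p) n ε).ncard : ℝ)) else 0) *
        ∑ s : Fin n → Sign, (2 : ℝ) ^ (-(n : ℝ)) *
          ∑ y : Fin n → Y, (∏ i, W (s i, a i) (y i)) *
            ∑ a' : Fin n → A,
              (if a' ∈ BtypicalSet (pairASY W p) n ε ∧ a' ≠ a then 1 else 0) *
              ∑ s' : Fin n → Sign, (2 : ℝ) ^ (-(n : ℝ)) *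
                (if (a', s', y) ∈ tripleTypicalSet W p n ε then 1 else 0)) ≤
      (2 : ℝ) ^ ((n : ℝ) * (ent p - mutualInfo W p + 10 * ε)) := by
  use 1
  intro n hn
  set HJ := ent (jointASY W p) with hHJ
  set HY := ent (outputPMF W p) with hHY
  set D : ℝ := (2:ℝ) ^ (-(n:ℝ)) * ((2:ℝ) ^ ((n:ℝ) * (HJ + ε)) * (2:ℝ) ^ (-(n:ℝ) * (HY - ε)))
    with hD
  have hD0 : 0 ≤ D := by positivity
  set 𝔅 := BtypicalSet (pairASY W p) n ε with h𝔅
  set T := tripleTypicalSet W p n ε with hT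
  -- inner bound: for every a and y, the inner double sum is ≤ D
  have inner_bd : ∀ (a : Fin n → A) (y : Fin n → Y),
      (∑ a' : Fin n → A, (if a' ∈ 𝔅 ∧ a' ≠ a then 1 else 0) *
        ∑ s' : Fin n → Sign, (2 : ℝ) ^ (-(n : ℝ)) *
          (if (a', s', y) ∈ T then 1 else 0)) ≤ D := by
    intro a y
    have step1 : (∑ a' : Fin n → A, (if a' ∈ 𝔅 ∧ a' ≠ a then 1 else 0) *
        ∑ s' : Fin n → Sign, (2 : ℝ) ^ (-(n : ℝ)) *
          (if (a', s', y) ∈ T then 1 else 0))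
        ≤ ∑ a' : Fin n → A, ∑ s' : Fin n → Sign, (2 : ℝ) ^ (-(n : ℝ)) *
          (if (a', s', y) ∈ T then 1 else 0) := by
      apply Finset.sum_le_sum
      intro a' _
      have hnn : (0:ℝ) ≤ ∑ s' : Fin n → Sign, (2 : ℝ) ^ (-(n : ℝ)) *
          (if (a', s', y) ∈ T then 1 else 0) := by
        apply Finset.sum_nonneg; intro s' _; positivity
      split
      · simp
      · simpa using hnn
    refine step1.trans ?_
    by_cases hex : ∃ a' s', (a', s', y) ∈ T
    · obtain ⟨a₀, s₀, h₀⟩ := hex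
      -- y is output-typical
      have hy1 : 0 < ∏ i, outputPMF W p (y i) := h₀.2.2.1
      have hy2 : |(-(1 / (n : ℝ)) * logb 2 (∏ i, outputPMF W p (y i))) - HY| ≤ ε :=
        h₀.2.2.2.2.2.2.1
      have hyle : ∏ i, outputPMF W p (y i) ≤ (2:ℝ) ^ (-(n:ℝ) * (HY - ε)) :=
        seqProb_le' (outputPMF W p) hn hy1 hy2
      -- each typical triple has large joint probability
      have hQ : ∀ (a' : Fin n → A) (s' : Fin n → Sign),
          ((if (a', s', y) ∈ T then (1:ℝ) else 0))
            ≤ (2:ℝ) ^ ((n:ℝ) * (HJ + ε)) *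
              (if (a', s', y) ∈ T then ∏ i, jointASY W p (a' i, s' i, y i) else 0) := by
        intro a' s'
        split
        · rename_i hmem
          have hq1 : 0 < ∏ i, jointASY W p (a' i, s' i, y i) := hmem.2.2.2.1
          have hq2 : |(-(1 / (n : ℝ)) *
              logb 2 (∏ i, jointASY W p (a' i, s' i, y i))) - HJ| ≤ ε :=
            hmem.2.2.2.2.2.2.2
          have := seqProb_ge (jointASY W p) hn
            (u := fun i => (a' i, s' i, y i)) hq1 hq2
          have h2 : (2:ℝ) ^ ((n:ℝ) * (HJ + ε)) * (2:ℝ) ^ (-(n:ℝ) * (HJ + ε))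
              ≤ (2:ℝ) ^ ((n:ℝ) * (HJ + ε)) * ∏ i, jointASY W p (a' i, s' i, y i) :=
            mul_le_mul_of_nonneg_left this (by positivity)
          rw [← Real.rpow_add two_pos] at h2
          simpa using h2
        · simp
      calc (∑ a' : Fin n → A, ∑ s' : Fin n → Sign, (2 : ℝ) ^ (-(n : ℝ)) *
            (if (a', s', y) ∈ T then 1 else 0))
          = (2 : ℝ) ^ (-(n : ℝ)) * ∑ a' : Fin n → A, ∑ s' : Fin n → Sign,
            (if (a', s', y) ∈ T then (1:ℝ) else 0) := by
            rw [Finset.mul_sum]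
            exact Finset.sum_congr rfl fun a' _ => by rw [Finset.mul_sum]
        _ ≤ (2 : ℝ) ^ (-(n : ℝ)) * ((2:ℝ) ^ ((n:ℝ) * (HJ + ε)) *
            ∑ a' : Fin n → A, ∑ s' : Fin n → Sign,
              (if (a', s', y) ∈ T then ∏ i, jointASY W p (a' i, s' i, y i) else 0)) := by
            apply mul_le_mul_of_nonneg_left _ (by positivity)
            rw [Finset.mul_sum]
            apply Finset.sum_le_sum
            intro a' _
            rw [Finset.mul_sum]
            exact Finset.sum_le_sum fun s' _ => hQ a' s'
        _ ≤ (2 : ℝ) ^ (-(n : ℝ)) * ((2:ℝ) ^ ((n:ℝ) * (HJ + ε)) *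
            ∑ a' : Fin n → A, ∑ s' : Fin n → Sign,
              ∏ i, jointASY W p (a' i, s' i, y i)) := by
            apply mul_le_mul_of_nonneg_left _ (by positivity)
            apply mul_le_mul_of_nonneg_left _ (by positivity)
            apply Finset.sum_le_sum; intro a' _
            apply Finset.sum_le_sum; intro s' _
            have hnn : 0 ≤ ∏ i, jointASY W p (a' i, s' i, y i) := by
              apply Finset.prod_nonneg; intro i _
              have := hp0 (a' i); have := hW0 (s' i, a' i) (y i)
              show (0:ℝ) ≤ p (a' i) * (1/2 : ℝ) * W (s' i, a' i) (y i)
              positivity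
            split <;> simp [hnn]
        _ ≤ D := by
            rw [seq_marg W p y]
            apply mul_le_mul_of_nonneg_left _ (by positivity)
            exact mul_le_mul_of_nonneg_left hyle (by positivity)
    · push_neg at hex
      have : ∀ (a' : Fin n → A) (s' : Fin n → Sign),
          (2 : ℝ) ^ (-(n : ℝ)) * (if (a', s', y) ∈ T then (1:ℝ) else 0) = 0 := by
        intro a' s'; simp [hex a' s']
      simp only [this, Finset.sum_const_zero]
      exact hD0
  -- output distribution sums to one
  have Py1 : ∀ (s : Fin n → Sign) (a : Fin n → A),
      ∑ y : Fin n → Y, ∏ i, W (s i, a i) (y i) = 1 := by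
    intro s a
    rw [sum_fn_prod (fun i yy => W (s i, a i) yy)]
    simp [hW1]
  have Py0 : ∀ (s : Fin n → Sign) (a : Fin n → A) (y : Fin n → Y),
      0 ≤ ∏ i, W (s i, a i) (y i) := by
    intro s a y
    exact Finset.prod_nonneg fun i _ => hW0 _ _
  have hw0 : ∀ a : Fin n → A,
      (0:ℝ) ≤ (if a ∈ 𝔅 then (1 / ((𝔅.ncard : ℝ))) else 0) := by
    intro a; split <;> positivity
  -- weights sum to at most one
  have hwsum : ∑ a : Fin n → A, (if a ∈ 𝔅 then (1 / ((𝔅.ncard : ℝ))) else 0) ≤ 1 := by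
    have e1 : ∑ a : Fin n → A, (if a ∈ 𝔅 then (1 / ((𝔅.ncard : ℝ))) else 0)
        = ((Finset.univ.filter (· ∈ 𝔅)).card : ℝ) * (1 / ((𝔅.ncard : ℝ))) := by
      rw [← Finset.sum_filter, Finset.sum_const, nsmul_eq_mul]
    have e2 : (Finset.univ.filter (· ∈ 𝔅)).card = 𝔅.ncard := by
      rw [Set.ncard_eq_toFinset_card']
      congr 1
      ext x
      simp
    rw [e1, e2]
    rcases Nat.eq_zero_or_pos 𝔅.ncard with h | h
    · rw [h]; norm_num
    · rw [mul_one_div, div_self (by exact_mod_cast h.ne')]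
  -- the big chain
  have main : (∑ a : Fin n → A,
        (if a ∈ 𝔅 then (1 / ((𝔅.ncard : ℝ))) else 0) *
        ∑ s : Fin n → Sign, (2 : ℝ) ^ (-(n : ℝ)) *
          ∑ y : Fin n → Y, (∏ i, W (s i, a i) (y i)) *
            ∑ a' : Fin n → A,
              (if a' ∈ 𝔅 ∧ a' ≠ a then 1 else 0) *
              ∑ s' : Fin n → Sign, (2 : ℝ) ^ (-(n : ℝ)) *
                (if (a', s', y) ∈ T then 1 else 0)) ≤ D := by
    have hcard : ((Fintype.card (Fin n → Sign)) : ℝ) = (2:ℝ) ^ (n : ℕ) := by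
      rw [Fintype.card_fun]
      norm_num
      rfl
    calc (∑ a : Fin n → A,
        (if a ∈ 𝔅 then (1 / ((𝔅.ncard : ℝ))) else 0) *
        ∑ s : Fin n → Sign, (2 : ℝ) ^ (-(n : ℝ)) *
          ∑ y : Fin n → Y, (∏ i, W (s i, a i) (y i)) *
            ∑ a' : Fin n → A,
              (if a' ∈ 𝔅 ∧ a' ≠ a then 1 else 0) *
              ∑ s' : Fin n → Sign, (2 : ℝ) ^ (-(n : ℝ)) *
                (if (a', s', y) ∈ T then 1 else 0))
        ≤ ∑ a : Fin n → A, (if a ∈ 𝔅 then (1 / ((𝔅.ncard : ℝ))) else 0) * D := by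
          apply Finset.sum_le_sum
          intro a _
          apply mul_le_mul_of_nonneg_left _ (hw0 a)
          calc (∑ s : Fin n → Sign, (2 : ℝ) ^ (-(n : ℝ)) *
              ∑ y : Fin n → Y, (∏ i, W (s i, a i) (y i)) *
                ∑ a' : Fin n → A,
                  (if a' ∈ 𝔅 ∧ a' ≠ a then 1 else 0) *
                  ∑ s' : Fin n → Sign, (2 : ℝ) ^ (-(n : ℝ)) *
                    (if (a', s', y) ∈ T then 1 else 0))
              ≤ ∑ s : Fin n → Sign, (2 : ℝ) ^ (-(n : ℝ)) * D := by
                apply Finset.sum_le_sum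
                intro s _
                apply mul_le_mul_of_nonneg_left _ (by positivity)
                calc (∑ y : Fin n → Y, (∏ i, W (s i, a i) (y i)) *
                    ∑ a' : Fin n → A,
                      (if a' ∈ 𝔅 ∧ a' ≠ a then 1 else 0) *
                      ∑ s' : Fin n → Sign, (2 : ℝ) ^ (-(n : ℝ)) *
                        (if (a', s', y) ∈ T then 1 else 0))
                    ≤ ∑ y : Fin n → Y, (∏ i, W (s i, a i) (y i)) * D :=
                      Finset.sum_le_sum fun y _ =>
                        mul_le_mul_of_nonneg_left (inner_bd a y) (Py0 s a y)
                  _ = D := by rw [← Finset.sum_mul, Py1 s a, one_mul]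
            _ = D := by
                rw [Finset.sum_const, nsmul_eq_mul, Finset.card_univ, hcard,
                  Real.rpow_neg two_pos.le, Real.rpow_natCast]
                field_simp
      _ = (∑ a : Fin n → A, (if a ∈ 𝔅 then (1 / ((𝔅.ncard : ℝ))) else 0)) * D :=
          (Finset.sum_mul ..).symm
      _ ≤ 1 * D := mul_le_mul_of_nonneg_right hwsum hD0
      _ = D := one_mul D
  refine main.trans ?_
  -- D ≤ RHS
  have hI : mutualInfo W p = ent p + 1 + HY - HJ := mutualInfo_eq_ent W hW0 hW1 p hp0 hp1
  rw [hD, ← Real.rpow_add two_pos, ← Real.rpow_add two_pos]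
  apply Real.rpow_le_rpow_of_exponent_le one_le_two
  have hn0 : (0:ℝ) ≤ n := Nat.cast_nonneg n
  nlinarith [mul_nonneg hn0 hε.le]
end
end
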